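/- arXiv:1606.09018 — 5 statements merged into one kernel-verified Lean document; each statement's English description precedes it below -/
import Mathlib

section
/- For every finite poset P, the interval monoid Int(P) is noetherian. -/
/-! Common definitions: multifractions, divisibility, interval monoids, zigzags. -/

section Defs

variable {M : Type*}

/-- A multifraction on a monoid `M`: a finite sequence with entries alternately in `M`
(sign `true`) and in a formal disjoint copy of `M` (sign `false`). -/
structure Multifraction (M : Type*) [Monoid M] where
  entries : List (Bool × M)
  alt : entries.Chain' fun p q => p.1 ≠ q.1

/-- The product of two multifraction entry lists: merge the adjacent entries when they have
the same sign, concatenate otherwise. -/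
def mfMul [Monoid M] (l₁ l₂ : List (Bool × M)) : List (Bool × M) :=
  match l₁.getLast?, l₂ with
  | some (b, x), (c, y) :: t =>
      if b = c then l₁.dropLast ++ (b, if b then x * y else y * x) :: t else l₁ ++ l₂
  | _, _ => l₁ ++ l₂

/-- The one-entry positive multifraction. -/
def mfPos [Monoid M] (x : M) : Multifraction M := ⟨[(true, x)], List.isChain_singleton _⟩

/-- The one-entry negative multifraction. -/
def mfNeg [Monoid M] (x : M) : Multifraction M := ⟨[(false, x)], List.isChain_singleton _⟩

/-- `a` left divides `b`. -/
def LDvd [Monoid M] (a b : M) : Prop := ∃ c, a * c = b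

/-- `a` right divides `b`. -/
def RDvd [Monoid M] (a b : M) : Prop := ∃ c, c * a = b

/-- `M` is (left and right) cancellative. -/
def Cancellative (M : Type*) [Monoid M] : Prop :=
  (∀ a b c : M, a * b = a * c → b = c) ∧ (∀ a b c : M, b * a = c * a → b = c)

/-- `1` is the only invertible element of `M`. -/
def TrivialUnits (M : Type*) [Monoid M] : Prop := ∀ a : M, IsUnit a → a = 1

/-- Any two elements admit a left gcd. -/
def HasLeftGcds (M : Type*) [Monoid M] : Prop :=
  ∀ a b : M, ∃ d, LDvd d a ∧ LDvd d b ∧ ∀ e, LDvd e a → LDvd e b → LDvd e d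

/-- Any two elements admit a right gcd. -/
def HasRightGcds (M : Type*) [Monoid M] : Prop :=
  ∀ a b : M, ∃ d, RDvd d a ∧ RDvd d b ∧ ∀ e, RDvd e a → RDvd e b → RDvd e d

/-- `M` is a gcd-monoid. -/
def GcdMonoidProp (M : Type*) [Monoid M] : Prop :=
  Cancellative M ∧ TrivialUnits M ∧ HasLeftGcds M ∧ HasRightGcds M

/-- `m` is a right lcm of `u` and `v`. -/
def IsRightLcm [Monoid M] (u v m : M) : Prop :=
  LDvd u m ∧ LDvd v m ∧ ∀ w, LDvd u w → LDvd v w → LDvd m w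

/-- `m` is a left lcm of `u` and `v`. -/
def IsLeftLcm [Monoid M] (u v m : M) : Prop :=
  RDvd u m ∧ RDvd v m ∧ ∀ w, RDvd u w → RDvd v w → RDvd m w

/-- `M` is a noetherian monoid: cancellative, with trivial units, and with well-founded
proper left and right divisibility. -/
def NoetherianMonoid (M : Type*) [Monoid M] : Prop :=
  Cancellative M ∧ TrivialUnits M ∧
    WellFounded (fun a b : M => LDvd a b ∧ a ≠ b) ∧
    WellFounded (fun a b : M => RDvd a b ∧ a ≠ b)

/-- An atom of a monoid. -/
def MonAtom [Monoid M] (a : M) : Prop :=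
  a ≠ 1 ∧ ∀ b c : M, a = b * c → b = 1 ∨ c = 1

/-- `η : M →* G` exhibits `G` as the enveloping (universal) group of `M`. -/
def IsEnvelopingGroup (M : Type*) [Monoid M] (G : Type*) [Group G] (η : M →* G) : Prop :=
  ∀ (H : Type*) [Group H] (f : M →* H), ∃! g : G →* H, g.comp η = f

/-- Evaluation of a multifraction in a group `G` through `η : M →* G`. -/
def mfEval [Monoid M] {G : Type*} [Group G] (η : M →* G) (a : Multifraction M) : G :=
  (a.entries.map fun p => if p.1 then η p.2 else (η p.2)⁻¹).prod

/-- A multifraction is trivial if all its entries equal `1`. -/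
def MfTrivial [Monoid M] (a : Multifraction M) : Prop := ∀ p ∈ a.entries, p.2 = 1

/-- `a` is a proper piece of `b` (relative to a monoid structure on multifractions). -/
def Piece [Monoid M] [Monoid (Multifraction M)] (a b : Multifraction M) : Prop :=
  ∃ c d : Multifraction M, b = c * a * d ∧ ¬(MfTrivial c ∧ MfTrivial d)

/-- The `j`-th entry of a multifraction (with default `(true, 1)`). -/
def mfEntry [Monoid M] (a : Multifraction M) (j : ℕ) : Bool × M :=
  (a.entries[j]?).getD (true, 1)

/-- The reduction rule `R_{i,x}` (here `j = i - 1` is the 0-based level):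
`b = a • R_{i,x}`. -/
def RedAt [Monoid M] (a b : Multifraction M) (j : ℕ) (x : M) : Prop :=
  b.entries.length = a.entries.length ∧ j + 1 < a.entries.length ∧
  (∀ k, ¬(j - 1 ≤ k ∧ k ≤ j + 1) → b.entries[k]? = a.entries[k]?) ∧
  (∀ k, (mfEntry b k).1 = (mfEntry a k).1) ∧
  (if (mfEntry a j).1 then
     if j = 0 then
       (mfEntry b 0).2 * x = (mfEntry a 0).2 ∧ (mfEntry b 1).2 * x = (mfEntry a 1).2
     else ∃ x' : M,
       (mfEntry b (j - 1)).2 = x' * (mfEntry a (j - 1)).2 ∧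
       (mfEntry b j).2 * x = x' * (mfEntry a j).2 ∧
       IsLeftLcm x (mfEntry a j).2 ((mfEntry b j).2 * x) ∧
       (mfEntry b (j + 1)).2 * x = (mfEntry a (j + 1)).2
   else
     if j = 0 then
       x * (mfEntry b 0).2 = (mfEntry a 0).2 ∧ x * (mfEntry b 1).2 = (mfEntry a 1).2
     else ∃ x' : M,
       (mfEntry b (j - 1)).2 = (mfEntry a (j - 1)).2 * x' ∧
       x * (mfEntry b j).2 = (mfEntry a j).2 * x' ∧
       IsRightLcm x (mfEntry a j).2 (x * (mfEntry b j).2) ∧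
       x * (mfEntry b (j + 1)).2 = (mfEntry a (j + 1)).2)

/-- One reduction step. -/
def Reduces [Monoid M] (a b : Multifraction M) : Prop := ∃ j x, x ≠ 1 ∧ RedAt a b j x

/-- A multifraction is reducible if some rule `R_{i,x}` with `x ≠ 1` applies to it. -/
def Reducible [Monoid M] (a : Multifraction M) : Prop := ∃ b, Reduces a b

/-- Iterated reduction. -/
def ReducesStar [Monoid M] : Multifraction M → Multifraction M → Prop :=
  Relation.ReflTransGen Reduces

/-- Semi-convergence of reduction (relative to an enveloping group `η : M →* G`):
every unital multifraction reduces to a trivial one. -/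
def SemiConvergent [Monoid M] {G : Type*} [Group G] (η : M →* G) : Prop :=
  ∀ a : Multifraction M, mfEval η a = 1 → ∃ b, ReducesStar a b ∧ MfTrivial b

end Defs

section Interval

variable (P : Type*) [PartialOrder P]

/-- The intervals of a poset `P`. -/
def Iv := {p : P × P // p.1 ≤ p.2}

/-- The defining relations of the interval monoid of `P`. -/
def intervalRel : FreeMonoid (Iv P) → FreeMonoid (Iv P) → Prop := fun u v =>
  (∃ (x y z : P) (hxy : x ≤ y) (hyz : y ≤ z),
      u = FreeMonoid.of ⟨(x, z), hxy.trans hyz⟩ ∧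
      v = FreeMonoid.of ⟨(x, y), hxy⟩ * FreeMonoid.of ⟨(y, z), hyz⟩) ∨
  (∃ x : P, u = FreeMonoid.of ⟨(x, x), le_refl x⟩ ∧ v = 1)

/-- The interval monoid of the poset `P`. -/
def IntervalMonoid := (conGen (intervalRel P)).Quotient

instance : Monoid (IntervalMonoid P) :=
  inferInstanceAs (Monoid (conGen (intervalRel P)).Quotient)

variable {P}

/-- The generator `[x, y]` of the interval monoid. -/
def intv (I : Iv P) : IntervalMonoid P := (conGen (intervalRel P)).mk' (FreeMonoid.of I)

variable (P)

/-- `P` is a local lattice: each `P^{≥ x}` is a meet-semilattice and each `P^{≤ x}` is a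
join-semilattice. -/
def LocalLattice : Prop :=
  (∀ x a b : P, x ≤ a → x ≤ b →
      ∃ m, x ≤ m ∧ m ≤ a ∧ m ≤ b ∧ ∀ c, x ≤ c → c ≤ a → c ≤ b → c ≤ m) ∧
  (∀ x a b : P, a ≤ x → b ≤ x →
      ∃ m, m ≤ x ∧ a ≤ m ∧ b ≤ m ∧ ∀ c, c ≤ x → a ≤ c → b ≤ c → m ≤ c)

/-- Noetherianity conditions on the poset `P`: no infinite descending chain in any `P^{≥ x}`
and no infinite ascending chain in any `P^{≤ x}`. -/
def PosetNoethCond : Prop :=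
  ∀ x : P, WellFounded (fun a b : {y : P // x ≤ y} => (a : P) < (b : P)) ∧
    WellFounded (fun a b : {y : P // y ≤ x} => (b : P) < (a : P))

variable {P}

/-- A simple multifraction on the interval monoid: each entry is a proper interval, and
consecutive entries share their target (at positive positions) or source (at negative ones). -/
def MfSimple (a : Multifraction (IntervalMonoid P)) : Prop :=
  ∃ l : List (Bool × Iv P),
    a.entries = l.map (fun p => (p.1, intv p.2)) ∧
    (∀ p ∈ l, p.2.1.1 ≠ p.2.1.2) ∧
    l.Chain' fun p q => if p.1 then p.2.1.2 = q.2.1.2 else p.2.1.1 = q.2.1.1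

/-- A positive `n`-zigzag in `P`. -/
def PosZigzag (n : ℕ) (x : ℕ → P) : Prop :=
  ∀ i ≤ n, i % 2 = 0 → (1 ≤ i → x i < x (i - 1)) ∧ (i < n → x i < x (i + 1))

/-- A negative `n`-zigzag in `P`. -/
def NegZigzag (n : ℕ) (x : ℕ → P) : Prop :=
  ∀ i ≤ n, i % 2 = 1 → (1 ≤ i → x i < x (i - 1)) ∧ (i < n → x i < x (i + 1))

/-- The zigzag `x` is simple: `x₁, ..., xₙ` are pairwise distinct. -/
def SimpleZz (n : ℕ) (x : ℕ → P) : Prop :=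
  ∀ i j, 1 ≤ i → i < j → j ≤ n → x i ≠ x j

/-- Reducibility of a zigzag at level `i`. -/
def ZzRedAt (n : ℕ) (x : ℕ → P) (i : ℕ) : Prop :=
  1 ≤ i ∧ i < n ∧
  ((2 ≤ i ∧ x i < x (i + 1) ∧
      ∃ y, x i < y ∧ y ≤ x (i + 1) ∧ ∃ u, x (i - 1) ≤ u ∧ y ≤ u) ∨
   (2 ≤ i ∧ x (i + 1) < x i ∧
      ∃ y, x (i + 1) ≤ y ∧ y < x i ∧ ∃ u, u ≤ x (i - 1) ∧ u ≤ y) ∨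
   (i = 1 ∧ x 0 < x 1 ∧ ∃ y, x 0 ≤ y ∧ y < x 1 ∧ x 2 ≤ y) ∨
   (i = 1 ∧ x 1 < x 0 ∧ ∃ y, x 1 < y ∧ y ≤ x 0 ∧ y ≤ x 2))

/-- A zigzag is reducible if it is reducible at some level. -/
def ZzReducible (n : ℕ) (x : ℕ → P) : Prop := ∃ i, ZzRedAt n x i

/-- The multifraction `a` is the image of the positive `n`-zigzag `x` under the map `F`. -/
def PosImage (n : ℕ) (x : ℕ → P) (a : Multifraction (IntervalMonoid P)) : Prop :=
  a.entries.length = n ∧ ∀ j < n,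
    if j % 2 = 0 then
      ∃ h : x j ≤ x (j + 1), a.entries[j]? = some (true, intv ⟨(x j, x (j + 1)), h⟩)
    else
      ∃ h : x (j + 1) ≤ x j, a.entries[j]? = some (false, intv ⟨(x (j + 1), x j), h⟩)

/-- The multifraction `a` is the image of the negative `n`-zigzag `x` under the map `F`. -/
def NegImage (n : ℕ) (x : ℕ → P) (a : Multifraction (IntervalMonoid P)) : Prop :=
  a.entries.length = n ∧ ∀ j < n,
    if j % 2 = 0 then
      ∃ h : x (j + 1) ≤ x j, a.entries[j]? = some (false, intv ⟨(x (j + 1), x j), h⟩)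
    else
      ∃ h : x j ≤ x (j + 1), a.entries[j]? = some (true, intv ⟨(x j, x (j + 1)), h⟩)

end Interval


section NF

open Classical

variable {P : Type*} [PartialOrder P]

lemma Iv.ext' {I J : Iv P} (h1 : I.1.1 = J.1.1) (h2 : I.1.2 = J.1.2) : I = J := by
  apply Subtype.ext
  exact Prod.ext h1 h2

/-- A list of intervals is normal: all intervals proper, adjacent ones non-composable. -/
def IvNormal (L : List (Iv P)) : Prop :=
  (∀ I ∈ L, I.1.1 ≠ I.1.2) ∧ L.Chain' (fun I J => I.1.2 ≠ J.1.1)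

/-- Right-multiply a normal list by one generator. -/
noncomputable def mulGen (L : List (Iv P)) (I : Iv P) : List (Iv P) :=
  if I.1.1 = I.1.2 then L
  else match h : L.getLast? with
    | some J =>
        if h2 : J.1.2 = I.1.1 then
          L.dropLast ++ [⟨(J.1.1, I.1.2), J.2.trans (h2.le.trans I.2)⟩]
        else L ++ [I]
    | none => L ++ [I]

lemma mulGen_triv {L : List (Iv P)} {I : Iv P} (h : I.1.1 = I.1.2) : mulGen L I = L := by
  simp [mulGen, h]

lemma mulGen_app {L : List (Iv P)} {I : Iv P} (hI : I.1.1 ≠ I.1.2)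
    (h : ∀ J ∈ L.getLast?, J.1.2 ≠ I.1.1) : mulGen L I = L ++ [I] := by
  unfold mulGen
  rw [if_neg hI]
  split
  · next J hJ => rw [dif_neg (h J (by simp [hJ]))]
  · rfl

lemma mulGen_merge {L : List (Iv P)} {I J : Iv P} (hI : I.1.1 ≠ I.1.2)
    (hL : L.getLast? = some J) (h2 : J.1.2 = I.1.1) :
    mulGen L I = L.dropLast ++ [⟨(J.1.1, I.1.2), J.2.trans (h2.le.trans I.2)⟩] := by
  unfold mulGen
  rw [if_neg hI]
  split
  · next J' hJ' =>
      rw [hL] at hJ'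
      cases hJ'
      rw [dif_pos h2]
  · next hn => rw [hL] at hn; cases hn

lemma IvNormal.append_singleton {L : List (Iv P)} {I : Iv P} (hL : IvNormal L)
    (hI : I.1.1 ≠ I.1.2) (h : ∀ J ∈ L.getLast?, J.1.2 ≠ I.1.1) : IvNormal (L ++ [I]) := by
  constructor
  · intro K hK
    rcases List.mem_append.mp hK with hK | hK
    · exact hL.1 K hK
    · simp only [List.mem_singleton] at hK; subst hK; exact hI
  · apply List.IsChain.append hL.2 (List.isChain_singleton I)
    intro x hx y hy
    simp only [List.head?_cons, Option.mem_def, Option.some.injEq] at hy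
    subst hy
    exact h x hx

lemma getLast?_eq_some_iff' {α : Type*} {L : List α} {a : α} :
    L.getLast? = some a ↔ ∃ M : List α, L = M ++ [a] := by
  constructor
  · intro h
    have hne : L ≠ [] := by rintro rfl; simp at h
    have h' : L.getLast hne = a := by
      rw [List.getLast?_eq_getLast hne] at h; exact Option.some.inj h
    subst h'
    exact ⟨L.dropLast, (List.dropLast_append_getLast hne).symm⟩
  · rintro ⟨M, rfl⟩; simp

lemma mulGen_normal {L : List (Iv P)} (hL : IvNormal L) (I : Iv P) :
    IvNormal (mulGen L I) := by
  by_cases hI : I.1.1 = I.1.2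
  · rw [mulGen_triv hI]; exact hL
  by_cases hc : ∃ J, L.getLast? = some J ∧ J.1.2 = I.1.1
  · obtain ⟨J, hJ, h2⟩ := hc
    rw [mulGen_merge hI hJ h2]
    obtain ⟨M, rfl⟩ := getLast?_eq_some_iff'.mp hJ
    have hMJ : J.1.1 ≠ I.1.2 := by
      intro hEq
      have hJp : J.1.1 ≠ J.1.2 := hL.1 J (by simp)
      exact hJp (le_antisymm J.2 (h2.le.trans (I.2.trans hEq.ge)))
    have hM : IvNormal M := by
      constructor
      · intro K hK; exact hL.1 K (List.mem_append.mpr (Or.inl hK))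
      · exact (List.isChain_append.mp hL.2).1
    simp only [List.dropLast_concat]
    apply hM.append_singleton hMJ
    intro K hK
    have := (List.isChain_append.mp hL.2).2.2 K hK J (by simp)
    simpa using this
  · push_neg at hc
    have hc' : ∀ J ∈ L.getLast?, J.1.2 ≠ I.1.1 := by
      intro J hJ; exact hc J hJ
    rw [mulGen_app hI hc']
    exact hL.append_singleton hI hc'

/-- The key local compatibility of `mulGen` with the defining relations. -/
lemma mulGen_split {x y z : P} (hxy : x ≤ y) (hyz : y ≤ z) (L : List (Iv P)) :
    mulGen (mulGen L ⟨(x, y), hxy⟩) ⟨(y, z), hyz⟩ = mulGen L ⟨(x, z), hxy.trans hyz⟩ := by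
  by_cases h1 : x = y
  · subst h1
    rw [mulGen_triv (L := L) (I := ⟨(x, x), hxy⟩) rfl]
  by_cases h2 : y = z
  · subst h2
    rw [mulGen_triv (I := ⟨(y, y), hyz⟩) rfl]
  have hxz : x ≠ z := fun h => h1 (le_antisymm hxy (h ▸ hyz))
  by_cases hc : ∃ J, L.getLast? = some J ∧ J.1.2 = x
  · obtain ⟨J, hJ, hJ2⟩ := hc
    rw [mulGen_merge (I := ⟨(x, y), hxy⟩) (J := J) h1 hJ hJ2, mulGen_merge (I := ⟨(x, z), hxy.trans hyz⟩) (J := J) hxz hJ hJ2]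
    erw [mulGen_merge h2 List.getLast?_concat rfl]
    simp [List.dropLast_concat]
    rfl
  · push_neg at hc
    have hc' : ∀ J ∈ L.getLast?, J.1.2 ≠ x := fun J hJ => hc J hJ
    rw [mulGen_app (L := L) (I := ⟨(x, y), hxy⟩) h1 hc', mulGen_app (L := L) (I := ⟨(x, z), hxy.trans hyz⟩) hxz hc']
    erw [mulGen_merge h2 List.getLast?_concat rfl]
    simp [List.dropLast_concat]
    rfl

/-- Running a word through `mulGen`. -/
noncomputable def runW (w : FreeMonoid (Iv P)) (L : List (Iv P)) : List (Iv P) :=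
  (FreeMonoid.toList w).foldl mulGen L

lemma runW_mul (u v : FreeMonoid (Iv P)) (L : List (Iv P)) :
    runW (u * v) L = runW v (runW u L) := by
  simp [runW, List.foldl_append]

lemma runW_of (I : Iv P) (L : List (Iv P)) : runW (FreeMonoid.of I) L = mulGen L I := rfl

/-- The congruence of having the same action on all lists. -/
def runCon : Con (FreeMonoid (Iv P)) where
  r u v := ∀ L, runW u L = runW v L
  iseqv := ⟨fun _ _ => rfl, fun h L => (h L).symm, fun h1 h2 L => (h1 L).trans (h2 L)⟩
  mul' := fun {w x y z} h1 h2 L => by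
    rw [runW_mul, runW_mul, h1 L, h2 (runW x L)]

lemma runCon_iff {u v : FreeMonoid (Iv P)} :
    (runCon : Con (FreeMonoid (Iv P))) u v ↔ ∀ L, runW u L = runW v L := Iff.rfl

lemma conGen_le_runCon : conGen (intervalRel P) ≤ runCon := by
  apply Con.conGen_le.mpr
  intro u v huv
  rcases huv with ⟨x, y, z, hxy, hyz, rfl, rfl⟩ | ⟨x, rfl, rfl⟩
  · refine runCon_iff.mpr fun L => ?_
    erw [runW_mul, runW_of, runW_of, runW_of, mulGen_split]
  · refine runCon_iff.mpr fun L => ?_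
    show mulGen L _ = runW 1 L
    exact mulGen_triv rfl

lemma runW_congr {u v : FreeMonoid (Iv P)} (h : conGen (intervalRel P) u v) (L : List (Iv P)) :
    runW u L = runW v L :=
  runCon_iff.mp (Con.le_def.mp conGen_le_runCon h) L

/-- Normal form of an element of the interval monoid. -/
noncomputable def nf (a : IntervalMonoid P) : List (Iv P) :=
  Con.liftOn a (fun w => runW w []) fun u v h => runW_congr h []

lemma nf_mk (w : FreeMonoid (Iv P)) : nf ((conGen (intervalRel P)).mk' w) = runW w [] := rfl

lemma nf_one : nf (1 : IntervalMonoid P) = [] := rfl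

lemma foldl_mulGen_normal {l : List (Iv P)} {L : List (Iv P)} (hL : IvNormal L) :
    IvNormal (l.foldl mulGen L) := by
  induction l generalizing L with
  | nil => exact hL
  | cons i t ih => exact ih (mulGen_normal hL i)

lemma nf_normal (a : IntervalMonoid P) : IvNormal (nf a) := by
  induction a using Con.induction_on with
  | _ w => exact foldl_mulGen_normal ⟨by simp, List.isChain_nil⟩

/-- Multiply back a list into the monoid. -/
noncomputable def gl (L : List (Iv P)) : IntervalMonoid P := (L.map intv).prod

@[simp] lemma gl_nil : gl ([] : List (Iv P)) = 1 := rfl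

lemma gl_append (L M : List (Iv P)) : gl (L ++ M) = gl L * gl M := by
  simp [gl]

lemma intv_triv (x : P) : intv (⟨(x, x), le_refl x⟩ : Iv P) = 1 := by
  apply (Con.eq _).mpr
  exact ConGen.Rel.of _ _ (Or.inr ⟨x, rfl, rfl⟩)

lemma intv_split {x y z : P} (hxy : x ≤ y) (hyz : y ≤ z) :
    intv (⟨(x, z), hxy.trans hyz⟩ : Iv P) = intv ⟨(x, y), hxy⟩ * intv ⟨(y, z), hyz⟩ := by
  apply (Con.eq _).mpr
  exact ConGen.Rel.of _ _ (Or.inl ⟨x, y, z, hxy, hyz, rfl, rfl⟩)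

lemma gl_mulGen (L : List (Iv P)) (I : Iv P) : gl (mulGen L I) = gl L * intv I := by
  by_cases hI : I.1.1 = I.1.2
  · rw [mulGen_triv hI]
    have hII : intv I = 1 := by
      have : I = ⟨(I.1.1, I.1.1), le_refl _⟩ := Iv.ext' rfl hI.symm
      rw [this, intv_triv]
    rw [hII, mul_one]
  by_cases hc : ∃ J, L.getLast? = some J ∧ J.1.2 = I.1.1
  · obtain ⟨J, hJ, h2⟩ := hc
    rw [mulGen_merge hI hJ h2]
    obtain ⟨M, rfl⟩ := getLast?_eq_some_iff'.mp hJ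
    simp only [List.dropLast_concat]
    rw [gl_append, gl_append, mul_assoc]
    congr 1
    simp only [gl, List.map_cons, List.map_nil, List.prod_cons, List.prod_nil, mul_one]
    have hsplit := intv_split (x := J.1.1) (y := I.1.1) (z := I.1.2) (J.2.trans h2.le) I.2
    have eJ : (⟨(J.1.1, I.1.1), J.2.trans h2.le⟩ : Iv P) = J := Iv.ext' rfl h2.symm
    have eI : (⟨(I.1.1, I.1.2), I.2⟩ : Iv P) = I := Iv.ext' rfl rfl
    rw [eJ, eI] at hsplit
    exact hsplit
  · push_neg at hc
    have hc' : ∀ J ∈ L.getLast?, J.1.2 ≠ I.1.1 := fun J hJ => hc J hJ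
    rw [mulGen_app hI hc', gl_append]
    simp [gl]

lemma gl_foldl (l : List (Iv P)) (L : List (Iv P)) :
    gl (l.foldl mulGen L) = gl L * gl l := by
  induction l generalizing L with
  | nil => simp
  | cons i t ih =>
      show gl (t.foldl mulGen (mulGen L i)) = _
      rw [ih, gl_mulGen, mul_assoc]
      have h : intv i * gl t = gl (i :: t) := by simp [gl]
      rw [h]

lemma gl_eq_mk (L : List (Iv P)) :
    gl L = (conGen (intervalRel P)).mk' (FreeMonoid.ofList L) := by
  induction L with
  | nil => exact (map_one _).symm
  | cons i t ih =>
      have h1 : FreeMonoid.ofList (i :: t) = FreeMonoid.of i * FreeMonoid.ofList t := rfl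
      rw [h1, map_mul, ← ih]
      simp only [gl, List.map_cons, List.prod_cons]
      rfl

lemma gl_runW (w : FreeMonoid (Iv P)) (L : List (Iv P)) :
    gl (runW w L) = gl L * gl (FreeMonoid.toList w) := gl_foldl _ _

lemma gl_nf (a : IntervalMonoid P) : gl (nf a) = a := by
  induction a using Con.induction_on with
  | _ w =>
      show gl (runW w []) = _
      rw [gl_runW, gl_nil, one_mul, gl_eq_mk]
      rfl

/-- Running a whole list (as a word). -/
noncomputable def lrun (N L : List (Iv P)) : List (Iv P) := N.foldl mulGen L

lemma nf_mul (a b : IntervalMonoid P) : nf (a * b) = lrun (nf b) (nf a) := by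
  induction a using Con.induction_on with
  | _ u =>
    induction b using Con.induction_on with
    | _ v =>
      have hcon : (conGen (intervalRel P)) v
          (FreeMonoid.ofList (nf ((conGen (intervalRel P)).mk' v))) := by
        apply (Con.eq _).mp
        have h := gl_eq_mk (nf ((conGen (intervalRel P)).mk' v))
        exact (gl_nf ((conGen (intervalRel P)).mk' v)).symm.trans h
      show runW (u * v) [] = lrun (nf ((conGen (intervalRel P)).mk' v)) (runW u [])
      rw [runW_mul]
      exact runW_congr hcon (runW u [])

/-- Composability of the junction between two lists. -/
def IvComp (L N : List (Iv P)) : Prop := ∃ J ∈ L.getLast?, ∃ I ∈ N.head?, J.1.2 = I.1.1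

lemma lrun_not_comp {L N : List (Iv P)} (hL : IvNormal L) (hN : IvNormal N)
    (h : ¬ IvComp L N) : lrun N L = L ++ N := by
  induction N generalizing L with
  | nil => simp [lrun]
  | cons I N' ih =>
      have hIp : I.1.1 ≠ I.1.2 := hN.1 I (by simp)
      have hjunc : ∀ J ∈ L.getLast?, J.1.2 ≠ I.1.1 := by
        intro J hJ hEq
        exact h ⟨J, hJ, I, by simp, hEq⟩
      have hstep : mulGen L I = L ++ [I] := mulGen_app hIp hjunc
      have hLI : IvNormal (L ++ [I]) := hstep ▸ mulGen_normal hL I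
      have hN' : IvNormal N' :=
        ⟨fun K hK => hN.1 K (by simp [hK]), (List.isChain_cons.mp hN.2).2⟩
      have hnc : ¬ IvComp (L ++ [I]) N' := by
        rintro ⟨J, hJ, K, hK, hEq⟩
        rw [List.getLast?_concat] at hJ
        have hJI : I = J := by simpa using hJ
        subst hJI
        exact (List.isChain_cons.mp hN.2).1 K hK hEq
      show lrun N' (mulGen L I) = _
      rw [hstep, ih hLI hN' hnc, List.append_assoc]
      rfl

lemma lrun_comp {L N : List (Iv P)} {J I : Iv P} (hL : IvNormal L) (hN : IvNormal N)
    (hJ : L.getLast? = some J) (hI : N.head? = some I) (h2 : J.1.2 = I.1.1) :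
    lrun N L = L.dropLast ++ ⟨(J.1.1, I.1.2), J.2.trans (h2.le.trans I.2)⟩ :: N.tail := by
  cases N with
  | nil => simp at hI
  | cons I0 N' =>
      obtain rfl : I0 = I := by simpa using hI
      have hIp : I0.1.1 ≠ I0.1.2 := hN.1 I0 (by simp)
      have hstep := mulGen_merge hIp hJ h2
      have hM : IvNormal (mulGen L I0) := mulGen_normal hL I0
      have hN' : IvNormal N' :=
        ⟨fun K hK => hN.1 K (by simp [hK]), (List.isChain_cons.mp hN.2).2⟩
      have hnc : ¬ IvComp (mulGen L I0) N' := by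
        rintro ⟨J', hJ', K, hK, hEq⟩
        erw [hstep, List.getLast?_concat] at hJ'
        have hJ'' : (⟨(J.1.1, I0.1.2), J.2.trans (h2.le.trans I0.2)⟩ : Iv P) = J' := by
          exact Option.some.inj hJ'
        subst hJ''
        exact (List.isChain_cons.mp hN.2).1 K hK hEq
      show lrun N' (mulGen L I0) = _
      rw [lrun_not_comp hM hN' hnc, hstep, List.append_assoc]
      rfl

lemma comp_cases {L N : List (Iv P)} (hL : IvNormal L) (hN : IvNormal N) :
    (¬ IvComp L N ∧ lrun N L = L ++ N) ∨
    (∃ J I, L.getLast? = some J ∧ N.head? = some I ∧ ∃ h2 : J.1.2 = I.1.1,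
      lrun N L = L.dropLast ++ ⟨(J.1.1, I.1.2), J.2.trans (h2.le.trans I.2)⟩ :: N.tail) := by
  by_cases hc : IvComp L N
  · obtain ⟨J, hJ, I, hI, h2⟩ := hc
    exact Or.inr ⟨J, I, hJ, hI, h2, lrun_comp hL hN hJ hI h2⟩
  · exact Or.inl ⟨hc, lrun_not_comp hL hN hc⟩

lemma head?_eq_some_iff' {α : Type*} {L : List α} {a : α} :
    L.head? = some a ↔ ∃ t, L = a :: t := by
  cases L <;> simp

lemma lrun_cancel_left {L M N : List (Iv P)} (hL : IvNormal L) (hM : IvNormal M)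
    (hN : IvNormal N) (h : lrun M L = lrun N L) : M = N := by
  rcases comp_cases hL hM with ⟨hcM, eM⟩ | ⟨J, I, hJ, hI, h2, eM⟩ <;>
    rcases comp_cases hL hN with ⟨hcN, eN⟩ | ⟨J', I', hJ', hI', h2', eN⟩
  · rw [eM, eN] at h
    exact List.append_cancel_left h
  · exfalso
    rw [eM, eN] at h
    obtain ⟨L0, rfl⟩ := getLast?_eq_some_iff'.mp hJ'
    rw [List.dropLast_concat, List.append_assoc] at h
    obtain ⟨hKJ, -⟩ := List.cons.inj (List.append_cancel_left h)
    have h3 := congrArg (fun K : Iv P => K.1.2) hKJ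
    obtain ⟨t, rfl⟩ := head?_eq_some_iff'.mp hI'
    exact hN.1 I' (by simp) (h2'.symm.trans h3)
  · exfalso
    rw [eM, eN] at h
    obtain ⟨L0, rfl⟩ := getLast?_eq_some_iff'.mp hJ
    rw [List.dropLast_concat, List.append_assoc] at h
    obtain ⟨hKJ, -⟩ := List.cons.inj (List.append_cancel_left h).symm
    have h3 := congrArg (fun K : Iv P => K.1.2) hKJ
    obtain ⟨t, rfl⟩ := head?_eq_some_iff'.mp hI
    exact hM.1 I (by simp) (h2.symm.trans h3)
  · rw [eM, eN] at h
    have hJJ : J = J' := by rw [hJ] at hJ'; exact Option.some.inj hJ'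
    subst hJJ
    obtain ⟨L0, rfl⟩ := getLast?_eq_some_iff'.mp hJ
    rw [List.dropLast_concat] at h
    obtain ⟨hK, htail⟩ := List.cons.inj (List.append_cancel_left h)
    have hII : I = I' := by
      apply Iv.ext'
      · rw [← h2, ← h2']
      · have h22 := congrArg (fun K : Iv P => K.1.2) hK
        exact h22
    obtain ⟨t, rfl⟩ := head?_eq_some_iff'.mp hI
    obtain ⟨t', rfl⟩ := head?_eq_some_iff'.mp hI'
    simp only [List.tail_cons] at htail
    rw [hII, htail]

lemma lrun_cancel_right {A M N : List (Iv P)} (hA : IvNormal A) (hM : IvNormal M)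
    (hN : IvNormal N) (h : lrun A M = lrun A N) : M = N := by
  rcases comp_cases hM hA with ⟨hcM, eM⟩ | ⟨J, I, hJ, hI, h2, eM⟩ <;>
    rcases comp_cases hN hA with ⟨hcN, eN⟩ | ⟨J', I', hJ', hI', h2', eN⟩
  · rw [eM, eN] at h
    exact List.append_cancel_right h
  · exfalso
    rw [eM, eN] at h
    obtain ⟨N0, rfl⟩ := getLast?_eq_some_iff'.mp hJ'
    obtain ⟨t, rfl⟩ := head?_eq_some_iff'.mp hI'
    rw [List.dropLast_concat] at h
    have hlen : M.length = N0.length := by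
      have hl := congrArg List.length h
      simp only [List.length_append, List.length_cons, List.tail_cons] at hl
      erw [List.length_cons] at hl
      omega
    obtain ⟨hK, -⟩ := List.cons.inj (List.append_inj h hlen).2
    have h3 := congrArg (fun K : Iv P => K.1.1) hK
    exact hN.1 J' (by simp) (h3.symm.trans h2'.symm)
  · exfalso
    rw [eM, eN] at h
    obtain ⟨M0, rfl⟩ := getLast?_eq_some_iff'.mp hJ
    obtain ⟨t, rfl⟩ := head?_eq_some_iff'.mp hI
    rw [List.dropLast_concat] at h
    have hlen : M0.length = N.length := by
      have hl := congrArg List.length h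
      simp only [List.length_append, List.length_cons, List.tail_cons] at hl
      erw [List.length_cons] at hl
      omega
    obtain ⟨hK, -⟩ := List.cons.inj (List.append_inj h hlen).2
    have h3 := congrArg (fun K : Iv P => K.1.1) hK
    exact hM.1 J (by simp) (h3.trans h2.symm)
  · rw [eM, eN] at h
    have hII : I = I' := by rw [hI] at hI'; exact Option.some.inj hI'
    subst hII
    obtain ⟨M0, rfl⟩ := getLast?_eq_some_iff'.mp hJ
    obtain ⟨N0, rfl⟩ := getLast?_eq_some_iff'.mp hJ'
    rw [List.dropLast_concat, List.dropLast_concat] at h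
    have hlen : M0.length = N0.length := by
      have hl := congrArg List.length h
      simp only [List.length_append, List.length_cons] at hl
      erw [List.length_cons] at hl
      omega
    have hinj := List.append_inj h hlen
    obtain ⟨hK, -⟩ := List.cons.inj hinj.2
    have h11 := congrArg (fun K : Iv P => K.1.1) hK
    have hJJ : J = J' := Iv.ext' h11 (h2.trans h2'.symm)
    rw [hinj.1, hJJ]

section Weight

variable [Finite P]

/-- A strictly monotone integer weight on a finite poset. -/
noncomputable def wtP (x : P) : ℤ := (Set.ncard {y : P | y < x} : ℤ)

lemma wtP_lt {x y : P} (h : x < y) : wtP x < wtP y := by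
  have hsub : {z : P | z < x} ⊂ {z : P | z < y} := by
    constructor
    · intro z hz; exact lt_trans hz h
    · intro hle
      exact absurd (hle (show x ∈ {z : P | z < y} from h)) (lt_irrefl x)
  have := Set.ncard_lt_ncard hsub (Set.toFinite _)
  unfold wtP
  exact_mod_cast this

/-- The weight homomorphism on the interval monoid. -/
noncomputable def wtHom : IntervalMonoid P →* Multiplicative ℤ :=
  Con.lift _ (FreeMonoid.lift fun I : Iv P => Multiplicative.ofAdd (wtP I.1.2 - wtP I.1.1))
    (by
      apply Con.conGen_le.mpr
      rintro u v (⟨x, y, z, hxy, hyz, rfl, rfl⟩ | ⟨x, rfl, rfl⟩) <;>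
        · rw [Con.ker_rel]
          simp only [map_mul, map_one]
          repeat erw [FreeMonoid.lift_eval_of]
          simp only [← ofAdd_add, ← ofAdd_zero]
          congr 1
          repeat erw [toAdd_ofAdd]
          ring)

/-- The additive weight. -/
noncomputable def wA (a : IntervalMonoid P) : ℤ := Multiplicative.toAdd (wtHom a)

lemma wA_mul (a b : IntervalMonoid P) : wA (a * b) = wA a + wA b := by
  unfold wA
  rw [map_mul]
  rfl

lemma wA_one : wA (1 : IntervalMonoid P) = 0 := by
  unfold wA
  rw [map_one]
  rfl

lemma wtHom_mk (w : FreeMonoid (Iv P)) :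
    wtHom ((conGen (intervalRel P)).mk' w)
      = FreeMonoid.lift (fun I : Iv P => Multiplicative.ofAdd (wtP I.1.2 - wtP I.1.1)) w := rfl

lemma wA_intv (I : Iv P) : wA (intv I) = wtP I.1.2 - wtP I.1.1 := by
  unfold wA intv
  rw [wtHom_mk, FreeMonoid.lift_eval_of]
  rfl

lemma wA_gl (L : List (Iv P)) :
    wA (gl L) = (L.map fun I : Iv P => wtP I.1.2 - wtP I.1.1).sum := by
  induction L with
  | nil => simpa using wA_one
  | cons i t ih =>
      have : gl (i :: t) = intv i * gl t := by simp [gl]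
      rw [this, wA_mul, wA_intv, ih, List.map_cons, List.sum_cons]

lemma nf_ne_nil {a : IntervalMonoid P} (h : a ≠ 1) : nf a ≠ [] := by
  intro hnil
  apply h
  rw [← gl_nf a, hnil, gl_nil]

lemma wA_nonneg (a : IntervalMonoid P) : 0 ≤ wA a := by
  rw [← gl_nf a, wA_gl]
  apply List.sum_nonneg
  intro x hx
  simp only [List.mem_map] at hx
  obtain ⟨I, hI, rfl⟩ := hx
  have hp : I.1.1 ≠ I.1.2 := (nf_normal a).1 I hI
  have : wtP I.1.1 < wtP I.1.2 := wtP_lt (lt_of_le_of_ne I.2 hp)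
  omega

lemma wA_pos {a : IntervalMonoid P} (h : a ≠ 1) : 0 < wA a := by
  rw [← gl_nf a, wA_gl]
  apply List.sum_pos
  · intro x hx
    simp only [List.mem_map] at hx
    obtain ⟨I, hI, rfl⟩ := hx
    have hp : I.1.1 ≠ I.1.2 := (nf_normal a).1 I hI
    have : wtP I.1.1 < wtP I.1.2 := wtP_lt (lt_of_le_of_ne I.2 hp)
    omega
  · simpa using nf_ne_nil h

end Weight

end NF

/-- For every finite poset `P`, the interval monoid `Int(P)` is noetherian. -/
theorem intervalMonoid_noetherian_of_finite (P : Type*) [PartialOrder P] [Finite P] :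
    NoetherianMonoid (IntervalMonoid P) := by
  have nfinj : ∀ a b : IntervalMonoid P, nf a = nf b → a = b := by
    intro a b h
    rw [← gl_nf a, ← gl_nf b, h]
  have hlc : ∀ a b c : IntervalMonoid P, a * b = a * c → b = c := by
    intro a b c h
    apply nfinj
    have h1 : lrun (nf b) (nf a) = lrun (nf c) (nf a) := by
      rw [← nf_mul, ← nf_mul, h]
    exact lrun_cancel_left (nf_normal a) (nf_normal b) (nf_normal c) h1
  have hrc : ∀ a b c : IntervalMonoid P, b * a = c * a → b = c := by
    intro a b c h
    apply nfinj
    have h1 : lrun (nf a) (nf b) = lrun (nf a) (nf c) := by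
      rw [← nf_mul, ← nf_mul, h]
    exact lrun_cancel_right (nf_normal a) (nf_normal b) (nf_normal c) h1
  have hunits : TrivialUnits (IntervalMonoid P) := by
    intro a ha
    by_contra hne
    obtain ⟨u, rfl⟩ := ha
    have hmul : (u : IntervalMonoid P) * (↑u⁻¹ : IntervalMonoid P) = 1 := u.mul_inv
    have h1 := wA_mul (u : IntervalMonoid P) (↑u⁻¹ : IntervalMonoid P)
    rw [hmul, wA_one] at h1
    have h2 := wA_pos hne
    have h3 := wA_nonneg (↑u⁻¹ : IntervalMonoid P)
    omega
  have hwfL : WellFounded (fun a b : IntervalMonoid P => LDvd a b ∧ a ≠ b) := by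
    refine Subrelation.wf ?_ (measure fun a : IntervalMonoid P => (wA a).toNat).wf
    rintro a b ⟨⟨c, rfl⟩, hne⟩
    have hcne : c ≠ 1 := by rintro rfl; exact hne (mul_one a).symm
    show (wA a).toNat < (wA (a * c)).toNat
    have h1 := wA_mul a c
    have h2 := wA_pos hcne
    have h3 := wA_nonneg a
    omega
  have hwfR : WellFounded (fun a b : IntervalMonoid P => RDvd a b ∧ a ≠ b) := by
    refine Subrelation.wf ?_ (measure fun a : IntervalMonoid P => (wA a).toNat).wf
    rintro a b ⟨⟨c, rfl⟩, hne⟩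
    have hcne : c ≠ 1 := by rintro rfl; exact hne (one_mul a).symm
    show (wA a).toNat < (wA (c * a)).toNat
    have h1 := wA_mul c a
    have h2 := wA_pos hcne
    have h3 := wA_nonneg a
    omega
  exact ⟨⟨hlc, hrc⟩, hunits, hwfL, hwfR⟩
end

section
/- Let M be a gcd-monoid. If da = AC, db = AD, and cb = BD hold in M, then ca = BC. (That is, every gcd-monoid satisfies the Malcev quasi-identity encoded by the word L₁R₁L₁*R₁*.) -/
/-- Every gcd-monoid satisfies the Malcev quasi-identity encoded by `L₁R₁L₁*R₁*`. -/
theorem gcdMonoid_malcev (M : Type*) [Monoid M] (h : GcdMonoidProp M)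
    (a b c d A B C D : M)
    (h1 : d * a = A * C) (h2 : d * b = A * D) (h3 : c * b = B * D) :
    c * a = B * C := by
  obtain ⟨⟨lcan, rcan⟩, tu, lgcd, rgcd⟩ := h
  -- in a cancellative monoid with trivial units, f * g = 1 forces f = 1
  have unit1 : ∀ f g : M, f * g = 1 → f = 1 := by
    intro f g hfg
    have hgf : g * f = 1 := by
      have : f * (g * f) = f * 1 := by rw [← mul_assoc, hfg, one_mul, mul_one]
      exact lcan _ _ _ this
    exact tu f ⟨⟨f, g, hfg, hgf⟩, rfl⟩
  -- take the left gcd e of d and A, write d = e d', A = e A'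
  obtain ⟨e, ⟨d', hd'⟩, ⟨A', hA'⟩, hmax⟩ := lgcd d A
  -- left coprimality of d' and A'
  have cop : ∀ s : M, LDvd s d' → LDvd s A' → s = 1 := by
    rintro s ⟨u, hu⟩ ⟨v, hv⟩
    obtain ⟨g, hg⟩ := hmax (e * s) ⟨u, by rw [mul_assoc, hu, hd']⟩
      ⟨v, by rw [mul_assoc, hv, hA']⟩
    have : e * (s * g) = e * 1 := by rw [← mul_assoc, hg, mul_one]
    exact unit1 s g (lcan _ _ _ this)
  have key1 : d' * a = A' * C := by
    apply lcan e
    rw [← mul_assoc, ← mul_assoc, hd', hA', h1]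
  have key2 : d' * b = A' * D := by
    apply lcan e
    rw [← mul_assoc, ← mul_assoc, hd', hA', h2]
  -- take the right gcd g of c*b and d'*b
  obtain ⟨g, ⟨t, ht⟩, ⟨s, hs⟩, gmax⟩ := rgcd (c * b) (d' * b)
  -- b right-divides g
  obtain ⟨g', hg'⟩ := gmax b ⟨c, rfl⟩ ⟨d', rfl⟩
  -- D right-divides g
  obtain ⟨g'', hg''⟩ := gmax D ⟨B, h3.symm⟩ ⟨A', key2.symm⟩
  -- s * g = d' * b, hence s left-divides both d' and A', hence s = 1
  have hsd' : s * g' = d' := by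
    apply rcan b
    rw [mul_assoc, hg', hs]
  have hsA' : s * g'' = A' := by
    apply rcan D
    rw [mul_assoc, hg'', hs, key2]
  have hs1 : s = 1 := cop s ⟨g', hsd'⟩ ⟨g'', hsA'⟩
  have hg : g = d' * b := by rw [← hs, hs1, one_mul]
  -- so d' * b right-divides c * b : t * (d' * b) = c * b
  rw [hg] at ht
  have htd' : t * d' = c := by
    apply rcan b
    rw [mul_assoc, ht]
  have htA' : t * A' = B := by
    apply rcan D
    rw [mul_assoc, ← key2, ht, h3]
  calc c * a = t * (d' * a) := by rw [← htd', mul_assoc]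
    _ = t * A' * C := by rw [key1, mul_assoc]
    _ = B * C := by rw [htA']
end

section
/- If M is a noetherian monoid (a cancellative monoid with no nontrivial invertible element in which proper left and right divisibility are well-founded), then the proper-piece relation on the multifraction monoid F±(M), where ā is a proper piece of b̄ if b̄ = c̄ · ā · d̄ with c̄, d̄ not both trivial, is a well-founded strict partial order. -/
section PieceProof

variable {M : Type*} [Monoid M]

/-- `a` is a proper factor of `b`. -/
def MFac (a b : M) : Prop := ∃ x y, b = x * a * y ∧ (x ≠ 1 ∨ y ≠ 1)

lemma wf_irrefl {α : Sort*} {r : α → α → Prop} (h : WellFounded r) (a : α) : ¬ r a a := by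
  induction a using h.induction with
  | _ x IH => exact fun hxx => IH x hxx hxx

lemma mul_eq_one_both (hc : Cancellative M) (hu : TrivialUnits M) {x y : M}
    (h : x * y = 1) : x = 1 ∧ y = 1 := by
  have h1 : x * (y * x) = x * 1 := by
    rw [← mul_assoc, h, one_mul, mul_one]
  have hyx : y * x = 1 := hc.1 x (y * x) 1 h1
  have hx : x = 1 := hu x ⟨⟨x, y, h, hyx⟩, rfl⟩
  refine ⟨hx, ?_⟩
  rwa [hx, one_mul] at h

lemma mfac_wf (hM : NoetherianMonoid M) : WellFounded (MFac (M := M)) := by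
  obtain ⟨hc, hu, hL, hR⟩ := hM
  have key : ∀ b a : M, LDvd a b → Acc (MFac (M := M)) a := by
    intro b
    refine hR.induction (C := fun b => ∀ a : M, LDvd a b → Acc (MFac (M := M)) a) b ?_
    intro b IH1 a
    refine hL.induction (C := fun a => LDvd a b → Acc (MFac (M := M)) a) a ?_
    intro a IH2 hab
    constructor
    rintro a' ⟨x, y, hxy, hne⟩
    by_cases hx : x = 1
    · subst hx
      rw [one_mul] at hxy
      have hy : y ≠ 1 := by
        rcases hne with h | h
        · exact absurd rfl h
        · exact h
      have hprop : LDvd a' a ∧ a' ≠ a := by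
        refine ⟨⟨y, hxy.symm⟩, fun hE => ?_⟩
        apply hy
        apply hc.1 a' y 1
        rw [mul_one, ← hxy, hE]
      obtain ⟨ca, hca⟩ := hab
      exact IH2 a' hprop ⟨y * ca, by rw [← mul_assoc, ← hxy, hca]⟩
    · obtain ⟨ca, hca⟩ := hab
      have hb' : x * (a' * (y * ca)) = b := by
        rw [← hca, hxy, mul_assoc, mul_assoc]
      have hprop : RDvd (a' * (y * ca)) b ∧ a' * (y * ca) ≠ b := by
        refine ⟨⟨x, hb'⟩, fun hE => ?_⟩
        apply hx
        apply hc.2 (a' * (y * ca)) x 1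
        rw [one_mul, hb', hE]
      exact IH1 _ hprop a' ⟨y * ca, rfl⟩
  exact ⟨fun a => key a a ⟨1, mul_one a⟩⟩

/-- Head value of an entry list. -/
def mHd (l : List (Bool × M)) : M := (l.head?.getD (true, 1)).2

/-- Last value of an entry list. -/
def mLst (l : List (Bool × M)) : M := (l.getLast?.getD (true, 1)).2

lemma mHd_cons (p : Bool × M) (t : List (Bool × M)) : mHd (p :: t) = p.2 := rfl

lemma mHd_append {l : List (Bool × M)} (l' : List (Bool × M)) (h : l ≠ []) :
    mHd (l ++ l') = mHd l := by
  obtain ⟨a, t, rfl⟩ := List.exists_cons_of_ne_nil h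
  rfl

lemma mLst_concat (l : List (Bool × M)) (p : Bool × M) : mLst (l ++ [p]) = p.2 := by
  simp [mLst]

lemma mLst_cons (p : Bool × M) {t : List (Bool × M)} (h : t ≠ []) :
    mLst (p :: t) = mLst t := by
  obtain ⟨a, t', rfl⟩ := List.exists_cons_of_ne_nil h
  simp [mLst, List.getLast?_cons_cons]

lemma mfac_mergeL {z x : M} (s : Bool) (hx : x ≠ 1) :
    MFac z (if s then x * z else z * x) := by
  cases s
  · exact ⟨1, x, by simp [mul_assoc], Or.inr hx⟩
  · exact ⟨x, 1, by simp, Or.inl hx⟩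

lemma mfac_mergeR {z x : M} (s : Bool) (hx : x ≠ 1) :
    MFac z (if s then z * x else x * z) := by
  cases s
  · exact ⟨x, 1, by simp, Or.inl hx⟩
  · exact ⟨1, x, by simp [mul_assoc], Or.inr hx⟩

lemma mfMul_cases (l₁ l₂ : List (Bool × M)) :
    mfMul l₁ l₂ = l₁ ++ l₂ ∨
    ∃ (l' : List (Bool × M)) (p : Bool × M) (q : Bool × M) (t : List (Bool × M)), l₁ = l' ++ [p] ∧ l₂ = q :: t ∧ p.1 = q.1 ∧
      mfMul l₁ l₂ = l' ++ (p.1, if p.1 then p.2 * q.2 else q.2 * p.2) :: t := by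
  unfold mfMul
  rcases h1 : l₁.getLast? with _ | ⟨b, x⟩ <;> rcases h2 : l₂ with _ | ⟨⟨c, y⟩, t⟩
  · exact Or.inl rfl
  · exact Or.inl rfl
  · exact Or.inl rfl
  · by_cases hbc : b = c
    · right
      obtain ⟨l', hl'⟩ := List.getLast?_eq_some_iff.1 h1
      refine ⟨l', (b, x), (c, y), t, hl', rfl, hbc, ?_⟩
      show (if b = c then _ else _) = _
      rw [if_pos hbc, hl', List.dropLast_concat]
    · show (if b = c then _ else _) = _ ∨ _
      rw [if_neg hbc]
      exact Or.inl rfl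

lemma mfMul_all_one (hc : Cancellative M) (hu : TrivialUnits M) {l₁ l₂ : List (Bool × M)}
    (h : ∀ p ∈ mfMul l₁ l₂, p.2 = 1) : (∀ p ∈ l₁, p.2 = 1) ∧ (∀ p ∈ l₂, p.2 = 1) := by
  rcases mfMul_cases l₁ l₂ with h1 | ⟨l', p, q, t, hl1, hl2, hs, h1⟩
  · rw [h1] at h
    constructor <;> intro x hx
    · exact h x (List.mem_append.2 (Or.inl hx))
    · exact h x (List.mem_append.2 (Or.inr hx))
  · rw [h1] at h
    have hm : (if p.1 then p.2 * q.2 else q.2 * p.2) = 1 :=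
      h _ (List.mem_append.2 (Or.inr (List.mem_cons_self)))
    have hpq : p.2 = 1 ∧ q.2 = 1 := by
      by_cases hp1 : p.1 = true
      · rw [if_pos hp1] at hm
        exact mul_eq_one_both hc hu hm
      · rw [if_neg hp1] at hm
        have := mul_eq_one_both hc hu hm
        exact ⟨this.2, this.1⟩
    constructor
    · intro x hx
      rw [hl1] at hx
      rcases List.mem_append.1 hx with hx | hx
      · exact h x (List.mem_append.2 (Or.inl hx))
      · rw [List.mem_singleton.1 hx]
        exact hpq.1
    · intro x hx
      rw [hl2] at hx
      rcases List.mem_cons.1 hx with rfl | hx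
      · exact hpq.2
      · exact h x (List.mem_append.2 (Or.inr (List.mem_cons_of_mem _ hx)))

/-- The key containment step, at the level of entry lists. -/
lemma mf_step (u v w : List (Bool × M))
    (hnt : ¬((∀ p ∈ u, p.2 = 1) ∧ (∀ p ∈ w, p.2 = 1))) :
    v.length < (mfMul (mfMul u v) w).length ∨
    (v.length = (mfMul (mfMul u v) w).length ∧
      (MFac (mHd v) (mHd (mfMul (mfMul u v) w)) ∨
       (mHd v = mHd (mfMul (mfMul u v) w) ∧
        MFac (mLst v) (mLst (mfMul (mfMul u v) w))))) := by
  rcases mfMul_cases u v with h1 | ⟨u', p, qv, tv, hueq, hveq, hsgn1, h1⟩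
  · -- mfMul u v = u ++ v
    rw [h1]
    rcases mfMul_cases (u ++ v) w with h2 | ⟨l', r, qw, tw, hleq, hweq, hsgn2, h2⟩
    · -- b = (u ++ v) ++ w
      rw [h2]
      by_cases hu0 : u = []
      · by_cases hw0 : w = []
        · exact absurd ⟨by rw [hu0]; intro x hx; exact absurd hx List.not_mem_nil,
            by rw [hw0]; intro x hx; exact absurd hx List.not_mem_nil⟩ hnt
        · left
          have := List.length_pos_iff.2 hw0
          simp only [List.length_append]
          omega
      · left
        have := List.length_pos_iff.2 hu0
        simp only [List.length_append]
        omega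
    · -- u ++ v = l' ++ [r], b = l' ++ merged :: tw
      rw [h2]
      have hlplus : l'.length + 1 = u.length + v.length := by
        have := congrArg List.length hleq
        simp only [List.length_append, List.length_cons, List.length_nil] at this
        omega
      by_cases hcrit : u = [] ∧ tw = []
      · obtain ⟨hu0, htw0⟩ := hcrit
        subst hu0; subst htw0
        rw [List.nil_append] at hleq
        -- v = l' ++ [r], w = [qw]
        have hq : qw.2 ≠ 1 := by
          intro hq1
          apply hnt
          refine ⟨fun x hx => absurd hx List.not_mem_nil, ?_⟩
          rw [hweq]
          intro x hx
          rw [List.mem_singleton.1 hx, hq1]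
        right
        refine ⟨?_, ?_⟩
        · rw [hleq]
          simp only [List.length_append, List.length_cons, List.length_nil]
        · by_cases hl0 : l' = []
          · subst hl0
            rw [List.nil_append] at hleq ⊢
            left
            rw [hleq, mHd_cons, mHd_cons]
            exact mfac_mergeR r.1 hq
          · right
            constructor
            · rw [hleq, mHd_append _ hl0, mHd_append _ hl0]
            · rw [hleq, mLst_concat, mLst_concat]
              exact mfac_mergeR r.1 hq
      · left
        have h5 : 0 < u.length ∨ 0 < tw.length := by
          by_contra hcon
          push_neg at hcon
          exact hcrit ⟨List.length_eq_zero_iff.1 (Nat.le_zero.1 hcon.1),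
            List.length_eq_zero_iff.1 (Nat.le_zero.1 hcon.2)⟩
        simp only [List.length_append, List.length_cons]
        omega
  · -- u = u' ++ [p], v = qv :: tv, mfMul u v = u' ++ m₁ :: tv
    rw [h1]
    set m₁ : Bool × M := (p.1, if p.1 then p.2 * qv.2 else qv.2 * p.2) with hm₁
    rcases mfMul_cases (u' ++ m₁ :: tv) w with h2 | ⟨l', r, qw, tw, hleq, hweq, hsgn2, h2⟩
    · rw [h2]
      by_cases hcrit : u' = [] ∧ w = []
      · obtain ⟨hu0, hw0⟩ := hcrit
        subst hu0; subst hw0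
        rw [List.nil_append] at hueq
        have hp : p.2 ≠ 1 := by
          intro hp1
          apply hnt
          refine ⟨?_, fun x hx => absurd hx List.not_mem_nil⟩
          intro x hx
          rw [hueq, List.mem_singleton] at hx
          rw [hx]; exact hp1
        right
        refine ⟨?_, Or.inl ?_⟩
        · rw [hveq]
          simp
        · have hbh : mHd (([] ++ m₁ :: tv) ++ []) = m₁.2 := by
            simp only [List.nil_append, List.append_nil, mHd_cons]
          rw [hveq, mHd_cons, hbh, hm₁]
          exact mfac_mergeL p.1 hp
      · left
        have h5 : 0 < u'.length ∨ 0 < w.length := by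
          by_contra hcon
          push_neg at hcon
          exact hcrit ⟨List.length_eq_zero_iff.1 (Nat.le_zero.1 hcon.1),
            List.length_eq_zero_iff.1 (Nat.le_zero.1 hcon.2)⟩
        rw [hveq]
        simp only [List.length_append, List.length_cons]
        omega
    · rw [h2]
      have hlplus : l'.length = u'.length + tv.length := by
        have := congrArg List.length hleq
        simp only [List.length_append, List.length_cons, List.length_nil] at this
        omega
      by_cases hcrit : u' = [] ∧ tw = []
      · obtain ⟨hu0, htw0⟩ := hcrit
        subst hu0; subst htw0
        simp only [List.length_nil, Nat.zero_add] at hlplus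
        rw [List.nil_append] at hueq hleq
        have hpq : p.2 ≠ 1 ∨ qw.2 ≠ 1 := by
          by_contra hcon
          push_neg at hcon
          apply hnt
          constructor
          · intro x hx
            rw [hueq, List.mem_singleton] at hx
            rw [hx]; exact hcon.1
          · intro x hx
            rw [hweq, List.mem_singleton] at hx
            rw [hx]; exact hcon.2
        by_cases htv : tv = []
        · subst htv
          simp only [List.length_nil] at hlplus
          have hl0 : l' = [] := List.length_eq_zero_iff.1 hlplus
          subst hl0
          rw [List.nil_append] at hleq
          have hrm : m₁ = r := by
            simp only [List.cons.injEq, and_true] at hleq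
            exact hleq
          right
          refine ⟨by rw [hveq]; simp, Or.inl ?_⟩
          rw [hveq, mHd_cons]
          simp only [List.nil_append, mHd_cons]
          rw [← hrm, hm₁]
          by_cases hb1 : p.1 = true
          · simp only [hb1, if_true]
            exact ⟨p.2, qw.2, rfl, hpq⟩
          · simp only [hb1, if_false, Bool.false_eq_true]
            exact ⟨qw.2, p.2, (mul_assoc _ _ _).symm, hpq.symm⟩
        · have htv' : 0 < tv.length := List.length_pos_iff.2 htv
          have hl0 : l' ≠ [] := by
            intro hE
            rw [hE] at hlplus
            simp at hlplus
            omega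
          have hhead : mHd l' = m₁.2 := by
            rw [← mHd_append [r] hl0, ← hleq, mHd_cons]
          have h7 : mLst tv = r.2 := by
            rw [← mLst_cons m₁ htv, hleq, mLst_concat]
          by_cases hp1 : p.2 = 1
          · have hq1 : qw.2 ≠ 1 := by
              rcases hpq with h | h
              · exact absurd hp1 h
              · exact h
            right
            refine ⟨?_, Or.inr ⟨?_, ?_⟩⟩
            · rw [hveq]
              simp only [List.length_append, List.length_cons, List.length_nil]
              omega
            · rw [hveq, mHd_cons, mHd_append _ hl0, hhead, hm₁]
              by_cases hb1 : p.1 = true <;> simp [hb1, hp1]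
            · rw [hveq, mLst_cons _ htv, h7, mLst_concat]
              exact mfac_mergeR r.1 hq1
          · right
            refine ⟨?_, Or.inl ?_⟩
            · rw [hveq]
              simp only [List.length_append, List.length_cons, List.length_nil]
              omega
            · rw [hveq, mHd_cons, mHd_append _ hl0, hhead, hm₁]
              exact mfac_mergeL p.1 hp1
      · left
        have h5 : 0 < u'.length ∨ 0 < tw.length := by
          by_contra hcon
          push_neg at hcon
          exact hcrit ⟨List.length_eq_zero_iff.1 (Nat.le_zero.1 hcon.1),
            List.length_eq_zero_iff.1 (Nat.le_zero.1 hcon.2)⟩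
        rw [hveq]
        simp only [List.length_append, List.length_cons]
        omega

end PieceProof

/-- If `M` is noetherian, the proper-piece relation on the multifraction monoid is a
well-founded strict partial order. -/
theorem piece_wellFounded_strict_order (M : Type*) [Monoid M]
    [instF : Monoid (Multifraction M)]
    (hmul : ∀ a b : Multifraction M, (a * b).entries = mfMul a.entries b.entries)
    (hone : (1 : Multifraction M).entries = [])
    (hM : NoetherianMonoid M) :
    IsTrans (Multifraction M) Piece ∧ IsIrrefl (Multifraction M) Piece ∧
      WellFounded (Piece (M := M)) := by
  have hfac : WellFounded (MFac (M := M)) := mfac_wf hM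
  obtain ⟨hc, hu, -, -⟩ := hM
  have htriv : ∀ x y : Multifraction M, MfTrivial (x * y) → MfTrivial x ∧ MfTrivial y := by
    intro x y h
    have h' : ∀ p ∈ mfMul x.entries y.entries, p.2 = 1 := by
      rw [← hmul]; exact h
    exact mfMul_all_one hc hu h'
  have htrans : ∀ a b c : Multifraction M, Piece a b → Piece b c → Piece a c := by
    rintro a b c ⟨c₁, d₁, hb, hnt₁⟩ ⟨c₂, d₂, hcc, hnt₂⟩
    refine ⟨c₂ * c₁, d₁ * d₂, ?_, ?_⟩
    · rw [hcc, hb]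
      simp only [mul_assoc]
    · rintro ⟨ht1, ht2⟩
      exact hnt₁ ⟨(htriv _ _ ht1).2, (htriv _ _ ht2).1⟩
  have hwfRel : WellFounded (Prod.Lex (· < · : ℕ → ℕ → Prop) (Prod.Lex (MFac (M := M)) (MFac (M := M)))) :=
    WellFounded.prod_lex (wellFounded_lt) (WellFounded.prod_lex hfac hfac)
  have hsub : Subrelation (Piece (M := M))
      (InvImage (Prod.Lex (· < · : ℕ → ℕ → Prop) (Prod.Lex (MFac (M := M)) (MFac (M := M))))
        (fun a : Multifraction M => (a.entries.length, mHd a.entries, mLst a.entries))) := by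
    rintro a b ⟨cc, dd, hb, hnt⟩
    have hbe : b.entries = mfMul (mfMul cc.entries a.entries) dd.entries := by
      rw [hb, hmul, hmul]
    have hstep := mf_step cc.entries a.entries dd.entries hnt
    rw [← hbe] at hstep
    show Prod.Lex _ _ (a.entries.length, mHd a.entries, mLst a.entries)
      (b.entries.length, mHd b.entries, mLst b.entries)
    rw [Prod.lex_def]
    rcases hstep with h | ⟨hlen, h⟩
    · exact Or.inl h
    · refine Or.inr ⟨hlen, ?_⟩
      rw [Prod.lex_def]
      rcases h with h | ⟨he, hf⟩
      · exact Or.inl h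
      · exact Or.inr ⟨he, hf⟩
  have hwfP : WellFounded (Piece (M := M)) :=
    Subrelation.wf hsub (InvImage.wf _ hwfRel)
  exact ⟨⟨htrans⟩, ⟨fun a ha => wf_irrefl hwfP a ha⟩, hwfP⟩
end

section
/- Let P be a local lattice. The map sending a positive n-zigzag (x₀,...,xₙ) to the multifraction [x₀,x₁] / [x₂,x₁] / [x₂,x₃] / ⋯ (and a negative zigzag to the corresponding multifraction starting with an inverted interval) is a bijection between positive (resp. negative) n-zigzags in P and simple positive (resp. negative) n-multifractions on Int(P). Moreover, if the multifraction associated to a zigzag is unital, then the zigzag is closed (xₙ = x₀). -/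
section ZZAux

theorem ind_sub_inj {P : Type*} {u v u' v' : P} (huv : u ≠ v) (hu'v' : u' ≠ v')
    (hval : ∀ f : P → ℤ, f v - f u = f v' - f u') : u = u' ∧ v = v' := by
  classical
  have hv := hval (fun p => if p = v then 1 else 0)
  have hu := hval (fun p => if p = u then 1 else 0)
  simp only [if_pos rfl, if_neg huv, if_neg (Ne.symm huv)] at hv hu
  split_ifs at hv hu <;> first | (exfalso; omega) | (constructor <;> simp_all)

variable {P : Type*} [PartialOrder P]

def ivPhi (f : P → ℤ) (I : Iv P) : Multiplicative ℤ :=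
  Multiplicative.ofAdd (f I.1.2 - f I.1.1)

theorem ivPhi_rel (f : P → ℤ) :
    conGen (intervalRel P) ≤ Con.ker (FreeMonoid.lift (ivPhi (P := P) f)) := by
  refine Con.conGen_le.mpr ?_
  rintro u v (⟨x, y, z, hxy, hyz, rfl, rfl⟩ | ⟨x, rfl, rfl⟩) <;> rw [Con.ker_rel]
  · change ivPhi f _ = ivPhi f _ * ivPhi f _
    simp only [map_mul, FreeMonoid.lift_eval_of, ivPhi, ← ofAdd_add]
    congr 1
    abel
  · change ivPhi f _ = 1
    simp only [map_one, FreeMonoid.lift_eval_of, ivPhi, sub_self, ofAdd_zero]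

def phiHom (f : P → ℤ) : IntervalMonoid P →* Multiplicative ℤ :=
  Con.lift _ (FreeMonoid.lift (ivPhi f)) (ivPhi_rel f)

theorem phiHom_intv (f : P → ℤ) (I : Iv P) : phiHom f (intv I) = ivPhi f I :=
  (Con.lift_mk' (ivPhi_rel f) _).trans (FreeMonoid.lift_eval_of _ _)

theorem intv_inj {I J : Iv P} (hI : I.1.1 ≠ I.1.2) (hJ : J.1.1 ≠ J.1.2)
    (h : intv I = intv J) : I = J := by
  have hval : ∀ f : P → ℤ, f I.1.2 - f I.1.1 = f J.1.2 - f J.1.1 := by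
    intro f
    have h2 : ivPhi f I = ivPhi f J := by rw [← phiHom_intv, ← phiHom_intv, h]
    exact congrArg Multiplicative.toAdd h2
  have h3 := ind_sub_inj hI hJ hval
  exact Subtype.ext (Prod.ext h3.1 h3.2)

/-- Telescoping evaluation of a multifraction entry list. -/
theorem mf_tele {M G : Type*} [Monoid M] [Group G] (η : M →* G) :
    ∀ (L : List (Bool × M)) (g : ℕ → G),
      (∀ j (h : j < L.length),
        (if (L[j]).1 then η (L[j]).2 else (η (L[j]).2)⁻¹) = (g j)⁻¹ * g (j + 1)) →
      (L.map fun p => if p.1 then η p.2 else (η p.2)⁻¹).prod = (g 0)⁻¹ * g L.length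
  | [], g, _ => by simp
  | p :: t, g, h => by
    have ht := mf_tele η t (fun j => g (j + 1)) (fun j hj => by
      have := h (j + 1) (by simpa using Nat.succ_lt_succ hj)
      simpa using this)
    have h0 := h 0 (Nat.succ_pos _)
    simp only [List.map_cons, List.prod_cons, ht, List.length_cons]
    simp only [List.getElem_cons_zero] at h0
    rw [h0, mul_assoc, mul_inv_cancel_left]

theorem mfEval_comp {M G H : Type*} [Monoid M] [Group G] [Group H] (η : M →* G)
    (k : G →* H) (a : Multifraction M) : mfEval (k.comp η) a = k (mfEval η a) := by
  unfold mfEval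
  rw [map_list_prod, List.map_map]
  refine congrArg _ (List.map_congr_left fun p _ => ?_)
  by_cases hp : p.1 <;> simp [hp]

/-- Alternating signs in a chain. -/
theorem alt_signs {α : Type*} (l : List (Bool × α))
    (h : ∀ i (_ : i + 1 < l.length), (l[i]).1 ≠ (l[i + 1]).1) (h0 : 0 < l.length) :
    ∀ j (hj : j < l.length), (l[j]).1 = ((l[0]'h0).1 == decide (j % 2 = 0)) := by
  intro j
  induction j with
  | zero => intro hj; simp
  | succ j ih =>
    intro hj
    have hj' : j < l.length := by omega
    have hne := h j hj
    have hih := ih hj'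
    rcases Nat.mod_two_eq_zero_or_one j with hp | hp <;>
      rcases Bool.eq_false_or_eq_true (l[0]'h0).1 with hb | hb <;>
      rcases Bool.eq_false_or_eq_true (l[j+1]).1 with hc | hc <;>
      simp_all [Nat.add_mod, hp]

open scoped Classical in
noncomputable def pzEntry (x : ℕ → P) (j : ℕ) : Bool × Iv P :=
  if j % 2 = 0 then
    if h : x j ≤ x (j + 1) then (true, ⟨(x j, x (j + 1)), h⟩)
    else (true, ⟨(x j, x j), le_refl _⟩)
  else
    if h : x (j + 1) ≤ x j then (false, ⟨(x (j + 1), x j), h⟩)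
    else (false, ⟨(x j, x j), le_refl _⟩)

theorem pzEntry_fst (x : ℕ → P) (j : ℕ) : (pzEntry x j).1 = decide (j % 2 = 0) := by
  unfold pzEntry; split_ifs <;> simp_all

theorem pzEntry_even {x : ℕ → P} {j : ℕ} (hp : j % 2 = 0) (h : x j ≤ x (j + 1)) :
    pzEntry x j = (true, ⟨(x j, x (j + 1)), h⟩) := by
  simp only [pzEntry, if_pos hp]; rw [dif_pos h]

theorem pzEntry_odd {x : ℕ → P} {j : ℕ} (hp : ¬ j % 2 = 0) (h : x (j + 1) ≤ x j) :
    pzEntry x j = (false, ⟨(x (j + 1), x j), h⟩) := by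
  simp only [pzEntry, if_neg hp]; rw [dif_pos h]

theorem pos_exists {n : ℕ} {x : ℕ → P} (hx : PosZigzag n x) :
    ∃ a : Multifraction (IntervalMonoid P), PosImage n x a ∧ MfSimple a := by
  have hev : ∀ j, j < n → j % 2 = 0 → x j < x (j + 1) := fun j hj hp => (hx j hj.le hp).2 hj
  have hod : ∀ j, j < n → ¬ j % 2 = 0 → x (j + 1) < x j := by
    intro j hj hp
    have h2 : (j + 1) % 2 = 0 := by omega
    have := (hx (j + 1) hj ((by omega : (j+1) % 2 = 0))).1 (by omega)
    simpa using this
  refine ⟨⟨(List.range n).map fun j => ((pzEntry x j).1, intv (pzEntry x j).2), ?_⟩, ?_, ?_⟩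
  · rw [List.Chain', List.isChain_iff_getElem]
    intro i hi
    simp only [List.length_map, List.length_range] at hi
    simp only [List.get_eq_getElem, List.getElem_map, List.getElem_range, pzEntry_fst]
    rcases Nat.mod_two_eq_zero_or_one i with hp | hp <;> simp [Nat.add_mod, hp]
  · constructor
    · simp
    · intro j hj
      have hent : ((List.range n).map fun j => ((pzEntry x j).1, intv (pzEntry x j).2))[j]?
          = some ((pzEntry x j).1, intv (pzEntry x j).2) := by
        rw [List.getElem?_map, List.getElem?_range hj]; rfl
      by_cases hp : j % 2 = 0
      · rw [if_pos hp]
        refine ⟨(hev j hj hp).le, ?_⟩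
        show _ = _
        rw [hent, pzEntry_even hp (hev j hj hp).le]
      · rw [if_neg hp]
        refine ⟨(hod j hj hp).le, ?_⟩
        show _ = _
        rw [hent, pzEntry_odd hp (hod j hj hp).le]
  · refine ⟨(List.range n).map (pzEntry x), by rw [List.map_map]; rfl, ?_, ?_⟩
    · intro p hp
      rw [List.mem_map] at hp
      obtain ⟨j, hj, rfl⟩ := hp
      rw [List.mem_range] at hj
      by_cases hp : j % 2 = 0
      · rw [pzEntry_even hp (hev j hj hp).le]
        exact (hev j hj hp).ne
      · rw [pzEntry_odd hp (hod j hj hp).le]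
        exact (hod j hj hp).ne
    · rw [List.Chain', List.isChain_iff_getElem]
      intro i hi
      simp only [List.length_map, List.length_range] at hi
      simp only [List.get_eq_getElem, List.getElem_map, List.getElem_range]
      by_cases hp : i % 2 = 0
      · rw [pzEntry_even hp (hev i (by omega) hp).le,
          pzEntry_odd (by omega) (hod (i + 1) (by omega) (by omega)).le]
        simp
      · rw [pzEntry_odd hp (hod i (by omega) hp).le,
          pzEntry_even (by omega : (i+1) % 2 = 0) (hev (i + 1) (by omega) (by omega)).le]
        simp

theorem pos_inj {n : ℕ} (hn : 1 ≤ n) {x y : ℕ → P} (hx : PosZigzag n x) (hy : PosZigzag n y)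
    {a : Multifraction (IntervalMonoid P)} (ha : PosImage n x a) (hb : PosImage n y a) :
    ∀ i ≤ n, x i = y i := by
  have key : ∀ j, j < n → x j = y j ∧ x (j + 1) = y (j + 1) := by
    intro j hj
    have e1 := ha.2 j hj
    have e2 := hb.2 j hj
    by_cases hp : j % 2 = 0
    · rw [if_pos hp] at e1 e2
      obtain ⟨hle1, he1⟩ := e1
      obtain ⟨hle2, he2⟩ := e2
      rw [he1] at he2
      have hpr := Option.some.inj he2
      have hint : intv ⟨(x j, x (j + 1)), hle1⟩ = intv ⟨(y j, y (j + 1)), hle2⟩ :=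
        congrArg Prod.snd hpr
      have hIJ := intv_inj (((hx j hj.le hp).2 hj).ne) (((hy j hj.le hp).2 hj).ne) hint
      have := Subtype.ext_iff.mp hIJ
      exact ⟨congrArg Prod.fst this, congrArg Prod.snd this⟩
    · rw [if_neg hp] at e1 e2
      obtain ⟨hle1, he1⟩ := e1
      obtain ⟨hle2, he2⟩ := e2
      rw [he1] at he2
      have hpr := Option.some.inj he2
      have hint : intv ⟨(x (j + 1), x j), hle1⟩ = intv ⟨(y (j + 1), y j), hle2⟩ :=
        congrArg Prod.snd hpr
      have hx1 : x (j + 1) < x j := by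
        have := (hx (j + 1) hj (by omega)).1 (by omega); simpa using this
      have hy1 : y (j + 1) < y j := by
        have := (hy (j + 1) hj (by omega)).1 (by omega); simpa using this
      have hIJ := intv_inj hx1.ne hy1.ne hint
      have := Subtype.ext_iff.mp hIJ
      exact ⟨congrArg Prod.snd this, congrArg Prod.fst this⟩
  intro i hi
  rcases Nat.lt_or_ge i n with h | h
  · exact (key i h).1
  · have h2 := (key (n - 1) (by omega)).2
    have hsa : n - 1 + 1 = n := by omega
    rw [hsa] at h2
    rw [show i = n by omega]
    exact h2

theorem pos_surj {n : ℕ} (hn : 1 ≤ n) {a : Multifraction (IntervalMonoid P)}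
    (hs : MfSimple a) (hlen : a.entries.length = n)
    (hhead : ∃ p, a.entries.head? = some p ∧ p.1 = true) :
    ∃ x : ℕ → P, PosZigzag n x ∧ PosImage n x a := by
  classical
  obtain ⟨l, hle, hprop, hch⟩ := hs
  have hllen : l.length = n := by rw [hle, List.length_map] at hlen; exact hlen
  have h0 : 0 < l.length := by omega
  have halt : ∀ i (_ : i + 1 < l.length), (l[i]).1 ≠ (l[i + 1]).1 := by
    have ha := a.alt
    rw [hle, List.Chain', List.isChain_iff_getElem] at ha
    intro i hi
    have := ha i (by simpa using (by omega : i + 1 < l.length))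
    simpa using this
  have hl0 : (l[0]'h0).1 = true := by
    obtain ⟨p, hp, hpt⟩ := hhead
    rw [hle, List.head?_map, List.head?_eq_getElem?, List.getElem?_eq_getElem h0] at hp
    have := Option.some.inj hp
    rw [← this] at hpt
    exact hpt
  have hsign : ∀ j (hj : j < l.length), (l[j]).1 = decide (j % 2 = 0) := by
    intro j hj
    rw [alt_signs l halt h0 j hj, hl0, Bool.true_beq]
  rw [List.Chain', List.isChain_iff_getElem] at hch
  set x : ℕ → P := fun j =>
    if hj : j < n then
      (if j % 2 = 0 then ((l[j]'(by omega)).2).1.1 else ((l[j]'(by omega)).2).1.2)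
    else
      (if (n - 1) % 2 = 0 then ((l[n - 1]'(by omega)).2).1.2
       else ((l[n - 1]'(by omega)).2).1.1) with hxdef
  have hA : ∀ j (hj : j < n), x j =
      if j % 2 = 0 then ((l[j]'(by omega)).2).1.1 else ((l[j]'(by omega)).2).1.2 := by
    intro j hj
    rw [hxdef]
    simp only
    rw [dif_pos hj]
  have hB : ∀ j (hj : j < n), x (j + 1) =
      if j % 2 = 0 then ((l[j]'(by omega)).2).1.2 else ((l[j]'(by omega)).2).1.1 := by
    intro j hj
    by_cases hj1 : j + 1 < n
    · have hx1 := hA (j + 1) hj1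
      have hcj := hch j (by omega)
      rw [hsign j (by omega)] at hcj
      by_cases hp : j % 2 = 0
      · rw [hx1, if_neg (by omega), if_pos hp]
        simp [hp] at hcj
        exact hcj.symm
      · rw [hx1, if_pos (by omega), if_neg hp]
        simp [hp] at hcj
        exact hcj.symm
    · have hjn : n - 1 = j := by omega
      rw [hxdef]
      simp only
      rw [dif_neg (by omega)]
      simp only [hjn]
  have hzz : PosZigzag n x := by
    intro i hi hp
    constructor
    · intro h1
      have hj : i - 1 < n := by omega
      have hodd : ¬ (i - 1) % 2 = 0 := by omega
      have hxa := hA (i - 1) hj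
      have hxb := hB (i - 1) hj
      have heq : i - 1 + 1 = i := by omega
      rw [heq] at hxb
      rw [hxa, hxb, if_neg hodd, if_neg hodd]
      exact lt_of_le_of_ne ((l[i-1]'(by omega)).2).2 (hprop _ (List.getElem_mem _))
    · intro h2
      rw [hA i h2, hB i h2, if_pos hp, if_pos hp]
      exact lt_of_le_of_ne ((l[i]'(by omega)).2).2 (hprop _ (List.getElem_mem _))
  refine ⟨x, hzz, hlen, ?_⟩
  intro j hj
  have hj' : j < l.length := by omega
  have hent : a.entries[j]? = some ((l[j]'hj').1, intv (l[j]'hj').2) := by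
    rw [hle, List.getElem?_map, List.getElem?_eq_getElem hj']
    rfl
  rw [hsign j hj'] at hent
  by_cases hp : j % 2 = 0
  · rw [if_pos hp]
    have hle1 : x j ≤ x (j + 1) := by
      rw [hA j hj, hB j hj, if_pos hp, if_pos hp]
      exact ((l[j]'hj').2).2
    refine ⟨hle1, ?_⟩
    have hIv : (⟨(x j, x (j + 1)), hle1⟩ : Iv P) = (l[j]'hj').2 := by
      apply Subtype.ext
      show (x j, x (j + 1)) = _
      rw [hA j hj, hB j hj, if_pos hp, if_pos hp]
    rw [hent, ← hIv]
    simp [hp]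
  · rw [if_neg hp]
    have hle1 : x (j + 1) ≤ x j := by
      rw [hA j hj, hB j hj, if_neg hp, if_neg hp]
      exact ((l[j]'hj').2).2
    refine ⟨hle1, ?_⟩
    have hIv : (⟨(x (j + 1), x j), hle1⟩ : Iv P) = (l[j]'hj').2 := by
      apply Subtype.ext
      show (x (j + 1), x j) = _
      rw [hA j hj, hB j hj, if_neg hp, if_neg hp]
    rw [hent, ← hIv]
    simp [hp]

open scoped Classical in
noncomputable def nzEntry (x : ℕ → P) (j : ℕ) : Bool × Iv P :=
  if j % 2 = 0 then
    if h : x (j + 1) ≤ x j then (false, ⟨(x (j + 1), x j), h⟩)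
    else (false, ⟨(x j, x j), le_refl _⟩)
  else
    if h : x j ≤ x (j + 1) then (true, ⟨(x j, x (j + 1)), h⟩)
    else (true, ⟨(x j, x j), le_refl _⟩)

theorem nzEntry_fst (x : ℕ → P) (j : ℕ) : (nzEntry x j).1 = !decide (j % 2 = 0) := by
  unfold nzEntry; split_ifs <;> simp_all

theorem nzEntry_even {x : ℕ → P} {j : ℕ} (hp : j % 2 = 0) (h : x (j + 1) ≤ x j) :
    nzEntry x j = (false, ⟨(x (j + 1), x j), h⟩) := by
  simp only [nzEntry, if_pos hp]; rw [dif_pos h]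

theorem nzEntry_odd {x : ℕ → P} {j : ℕ} (hp : ¬ j % 2 = 0) (h : x j ≤ x (j + 1)) :
    nzEntry x j = (true, ⟨(x j, x (j + 1)), h⟩) := by
  simp only [nzEntry, if_neg hp]; rw [dif_pos h]

theorem neg_exists {n : ℕ} {x : ℕ → P} (hx : NegZigzag n x) :
    ∃ a : Multifraction (IntervalMonoid P), NegImage n x a ∧ MfSimple a := by
  have hod : ∀ j, j < n → ¬ j % 2 = 0 → x j < x (j + 1) := fun j hj hp =>
    (hx j hj.le (by omega)).2 hj
  have hev : ∀ j, j < n → j % 2 = 0 → x (j + 1) < x j := by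
    intro j hj hp
    have := (hx (j + 1) hj (by omega)).1 (by omega)
    simpa using this
  refine ⟨⟨(List.range n).map fun j => ((nzEntry x j).1, intv (nzEntry x j).2), ?_⟩, ?_, ?_⟩
  · rw [List.Chain', List.isChain_iff_getElem]
    intro i hi
    simp only [List.length_map, List.length_range] at hi
    simp only [List.get_eq_getElem, List.getElem_map, List.getElem_range, nzEntry_fst]
    rcases Nat.mod_two_eq_zero_or_one i with hp | hp <;> simp [Nat.add_mod, hp]
  · constructor
    · simp
    · intro j hj
      have hent : ((List.range n).map fun j => ((nzEntry x j).1, intv (nzEntry x j).2))[j]?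
          = some ((nzEntry x j).1, intv (nzEntry x j).2) := by
        rw [List.getElem?_map, List.getElem?_range hj]; rfl
      by_cases hp : j % 2 = 0
      · rw [if_pos hp]
        refine ⟨(hev j hj hp).le, ?_⟩
        show _ = _
        rw [hent, nzEntry_even hp (hev j hj hp).le]
      · rw [if_neg hp]
        refine ⟨(hod j hj hp).le, ?_⟩
        show _ = _
        rw [hent, nzEntry_odd hp (hod j hj hp).le]
  · refine ⟨(List.range n).map (nzEntry x), by rw [List.map_map]; rfl, ?_, ?_⟩
    · intro p hp
      rw [List.mem_map] at hp
      obtain ⟨j, hj, rfl⟩ := hp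
      rw [List.mem_range] at hj
      by_cases hp : j % 2 = 0
      · rw [nzEntry_even hp (hev j hj hp).le]
        exact (hev j hj hp).ne
      · rw [nzEntry_odd hp (hod j hj hp).le]
        exact (hod j hj hp).ne
    · rw [List.Chain', List.isChain_iff_getElem]
      intro i hi
      simp only [List.length_map, List.length_range] at hi
      simp only [List.get_eq_getElem, List.getElem_map, List.getElem_range]
      by_cases hp : i % 2 = 0
      · rw [nzEntry_even hp (hev i (by omega) hp).le,
          nzEntry_odd (by omega) (hod (i + 1) (by omega) (by omega)).le]
        simp
      · rw [nzEntry_odd hp (hod i (by omega) hp).le,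
          nzEntry_even (by omega : (i+1) % 2 = 0) (hev (i + 1) (by omega) (by omega)).le]
        simp

theorem neg_inj' {n : ℕ} (hn : 1 ≤ n) {x y : ℕ → P} (hx : NegZigzag n x) (hy : NegZigzag n y)
    {a : Multifraction (IntervalMonoid P)} (ha : NegImage n x a) (hb : NegImage n y a) :
    ∀ i ≤ n, x i = y i := by
  have key : ∀ j, j < n → x j = y j ∧ x (j + 1) = y (j + 1) := by
    intro j hj
    have e1 := ha.2 j hj
    have e2 := hb.2 j hj
    by_cases hp : j % 2 = 0
    · rw [if_pos hp] at e1 e2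
      obtain ⟨hle1, he1⟩ := e1
      obtain ⟨hle2, he2⟩ := e2
      rw [he1] at he2
      have hpr := Option.some.inj he2
      have hint : intv ⟨(x (j + 1), x j), hle1⟩ = intv ⟨(y (j + 1), y j), hle2⟩ :=
        congrArg Prod.snd hpr
      have hx1 : x (j + 1) < x j := by
        have := (hx (j + 1) hj (by omega)).1 (by omega); simpa using this
      have hy1 : y (j + 1) < y j := by
        have := (hy (j + 1) hj (by omega)).1 (by omega); simpa using this
      have hIJ := intv_inj hx1.ne hy1.ne hint
      have := Subtype.ext_iff.mp hIJ
      exact ⟨congrArg Prod.snd this, congrArg Prod.fst this⟩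
    · rw [if_neg hp] at e1 e2
      obtain ⟨hle1, he1⟩ := e1
      obtain ⟨hle2, he2⟩ := e2
      rw [he1] at he2
      have hpr := Option.some.inj he2
      have hint : intv ⟨(x j, x (j + 1)), hle1⟩ = intv ⟨(y j, y (j + 1)), hle2⟩ :=
        congrArg Prod.snd hpr
      have hIJ := intv_inj (((hx j hj.le (by omega)).2 hj).ne)
        (((hy j hj.le (by omega)).2 hj).ne) hint
      have := Subtype.ext_iff.mp hIJ
      exact ⟨congrArg Prod.fst this, congrArg Prod.snd this⟩
  intro i hi
  rcases Nat.lt_or_ge i n with h | h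
  · exact (key i h).1
  · have h2 := (key (n - 1) (by omega)).2
    have hsa : n - 1 + 1 = n := by omega
    rw [hsa] at h2
    rw [show i = n by omega]
    exact h2

theorem neg_surj {n : ℕ} (hn : 1 ≤ n) {a : Multifraction (IntervalMonoid P)}
    (hs : MfSimple a) (hlen : a.entries.length = n)
    (hhead : ∃ p, a.entries.head? = some p ∧ p.1 = false) :
    ∃ x : ℕ → P, NegZigzag n x ∧ NegImage n x a := by
  classical
  obtain ⟨l, hle, hprop, hch⟩ := hs
  have hllen : l.length = n := by rw [hle, List.length_map] at hlen; exact hlen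
  have h0 : 0 < l.length := by omega
  have halt : ∀ i (_ : i + 1 < l.length), (l[i]).1 ≠ (l[i + 1]).1 := by
    have ha := a.alt
    rw [hle, List.Chain', List.isChain_iff_getElem] at ha
    intro i hi
    have := ha i (by simpa using (by omega : i + 1 < l.length))
    simpa using this
  have hl0 : (l[0]'h0).1 = false := by
    obtain ⟨p, hp, hpt⟩ := hhead
    rw [hle, List.head?_map, List.head?_eq_getElem?, List.getElem?_eq_getElem h0] at hp
    have := Option.some.inj hp
    rw [← this] at hpt
    exact hpt
  have hsign : ∀ j (hj : j < l.length), (l[j]).1 = !decide (j % 2 = 0) := by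
    intro j hj
    rw [alt_signs l halt h0 j hj, hl0, Bool.false_beq]
  rw [List.Chain', List.isChain_iff_getElem] at hch
  set x : ℕ → P := fun j =>
    if hj : j < n then
      (if j % 2 = 0 then ((l[j]'(by omega)).2).1.2 else ((l[j]'(by omega)).2).1.1)
    else
      (if (n - 1) % 2 = 0 then ((l[n - 1]'(by omega)).2).1.1
       else ((l[n - 1]'(by omega)).2).1.2) with hxdef
  have hA : ∀ j (hj : j < n), x j =
      if j % 2 = 0 then ((l[j]'(by omega)).2).1.2 else ((l[j]'(by omega)).2).1.1 := by
    intro j hj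
    rw [hxdef]
    simp only
    rw [dif_pos hj]
  have hB : ∀ j (hj : j < n), x (j + 1) =
      if j % 2 = 0 then ((l[j]'(by omega)).2).1.1 else ((l[j]'(by omega)).2).1.2 := by
    intro j hj
    by_cases hj1 : j + 1 < n
    · have hx1 := hA (j + 1) hj1
      have hcj := hch j (by omega)
      rw [hsign j (by omega)] at hcj
      by_cases hp : j % 2 = 0
      · rw [hx1, if_neg (by omega), if_pos hp]
        simp [hp] at hcj
        exact hcj.symm
      · rw [hx1, if_pos (by omega), if_neg hp]
        simp [hp] at hcj
        exact hcj.symm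
    · have hjn : n - 1 = j := by omega
      rw [hxdef]
      simp only
      rw [dif_neg (by omega)]
      simp only [hjn]
  have hzz : NegZigzag n x := by
    intro i hi hp
    constructor
    · intro h1
      have hj : i - 1 < n := by omega
      have hevp : (i - 1) % 2 = 0 := by omega
      have hxa := hA (i - 1) hj
      have hxb := hB (i - 1) hj
      have heq : i - 1 + 1 = i := by omega
      rw [heq] at hxb
      rw [hxa, hxb, if_pos hevp, if_pos hevp]
      exact lt_of_le_of_ne ((l[i-1]'(by omega)).2).2 (hprop _ (List.getElem_mem _))
    · intro h2
      have hodd : ¬ i % 2 = 0 := by omega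
      rw [hA i h2, hB i h2, if_neg hodd, if_neg hodd]
      exact lt_of_le_of_ne ((l[i]'(by omega)).2).2 (hprop _ (List.getElem_mem _))
  refine ⟨x, hzz, hlen, ?_⟩
  intro j hj
  have hj' : j < l.length := by omega
  have hent : a.entries[j]? = some ((l[j]'hj').1, intv (l[j]'hj').2) := by
    rw [hle, List.getElem?_map, List.getElem?_eq_getElem hj']
    rfl
  rw [hsign j hj'] at hent
  by_cases hp : j % 2 = 0
  · rw [if_pos hp]
    have hle1 : x (j + 1) ≤ x j := by
      rw [hA j hj, hB j hj, if_pos hp, if_pos hp]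
      exact ((l[j]'hj').2).2
    refine ⟨hle1, ?_⟩
    have hIv : (⟨(x (j + 1), x j), hle1⟩ : Iv P) = (l[j]'hj').2 := by
      apply Subtype.ext
      show (x (j + 1), x j) = _
      rw [hA j hj, hB j hj, if_pos hp, if_pos hp]
    rw [hent, ← hIv]
    simp [hp]
  · rw [if_neg hp]
    have hle1 : x j ≤ x (j + 1) := by
      rw [hA j hj, hB j hj, if_neg hp, if_neg hp]
      exact ((l[j]'hj').2).2
    refine ⟨hle1, ?_⟩
    have hIv : (⟨(x j, x (j + 1)), hle1⟩ : Iv P) = (l[j]'hj').2 := by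
      apply Subtype.ext
      show (x j, x (j + 1)) = _
      rw [hA j hj, hB j hj, if_neg hp, if_neg hp]
    rw [hent, ← hIv]
    simp [hp]

theorem closed_of_unital {n : ℕ} {x : ℕ → P} {a : Multifraction (IntervalMonoid P)}
    (h : (PosZigzag n x ∧ PosImage n x a) ∨ (NegZigzag n x ∧ NegImage n x a))
    (G : Type*) [Group G] (η : IntervalMonoid P →* G)
    (henv : IsEnvelopingGroup (IntervalMonoid P) G η) (heval : mfEval η a = 1) :
    x n = x 0 := by
  classical
  set f : P → ℤ := fun p => if p = x 0 then 1 else 0 with hf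
  obtain ⟨k, hk, -⟩ := henv (ULift (Multiplicative ℤ))
    ((MulEquiv.ulift.symm.toMonoidHom).comp (phiHom f))
  have h1 : mfEval (phiHom f) a = 1 := by
    have h1' : mfEval ((MulEquiv.ulift.symm.toMonoidHom).comp (phiHom f)) a = 1 := by
      rw [← hk, mfEval_comp, heval, map_one]
    rw [mfEval_comp] at h1'
    have := congrArg (MulEquiv.ulift (α := Multiplicative ℤ)) h1'
    simpa using this
  have hlen : a.entries.length = n := by rcases h with ⟨-, him⟩ | ⟨-, him⟩ <;> exact him.1
  have hterm : ∀ j (hj : j < a.entries.length),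
      (if (a.entries[j]).1 then phiHom f (a.entries[j]).2
        else (phiHom f (a.entries[j]).2)⁻¹)
        = ((fun i => Multiplicative.ofAdd (f (x i))) j)⁻¹ *
          (fun i => Multiplicative.ofAdd (f (x i))) (j + 1) := by
    intro j hj
    have hjn : j < n := by omega
    have hget : some (a.entries[j]) = a.entries[j]? := (List.getElem?_eq_getElem hj).symm
    simp only
    rw [← ofAdd_neg, ← ofAdd_add]
    rcases h with ⟨hzz, him⟩ | ⟨hzz, him⟩ <;> have he := him.2 j hjn <;>
        by_cases hp : j % 2 = 0
    · rw [if_pos hp] at he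
      obtain ⟨hle, he⟩ := he
      have heq : a.entries[j] = (true, intv ⟨(x j, x (j + 1)), hle⟩) :=
        Option.some.inj (hget.trans he)
      rw [heq]
      simp only [if_true]
      erw [phiHom_intv]
      unfold ivPhi
      congr 1
      abel
    · rw [if_neg hp] at he
      obtain ⟨hle, he⟩ := he
      have heq : a.entries[j] = (false, intv ⟨(x (j + 1), x j), hle⟩) :=
        Option.some.inj (hget.trans he)
      rw [heq]
      simp only [Bool.false_eq_true, if_false]
      erw [phiHom_intv]
      unfold ivPhi
      rw [← ofAdd_neg]
      congr 1
      abel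
    · rw [if_pos hp] at he
      obtain ⟨hle, he⟩ := he
      have heq : a.entries[j] = (false, intv ⟨(x (j + 1), x j), hle⟩) :=
        Option.some.inj (hget.trans he)
      rw [heq]
      simp only [Bool.false_eq_true, if_false]
      erw [phiHom_intv]
      unfold ivPhi
      rw [← ofAdd_neg]
      congr 1
      abel
    · rw [if_neg hp] at he
      obtain ⟨hle, he⟩ := he
      have heq : a.entries[j] = (true, intv ⟨(x j, x (j + 1)), hle⟩) :=
        Option.some.inj (hget.trans he)
      rw [heq]
      simp only [if_true]
      erw [phiHom_intv]
      unfold ivPhi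
      congr 1
      abel
  have h2 := mf_tele (phiHom f) a.entries (fun i => Multiplicative.ofAdd (f (x i))) hterm
  have h4 : (1 : Multiplicative ℤ) =
      (Multiplicative.ofAdd (f (x 0)))⁻¹ * Multiplicative.ofAdd (f (x a.entries.length)) := by
    rw [← h1]
    exact h2
  rw [hlen] at h4
  have h5 : Multiplicative.ofAdd (f (x 0)) = Multiplicative.ofAdd (f (x n)) :=
    inv_mul_eq_one.mp h4.symm
  have h6 : f (x 0) = f (x n) := congrArg Multiplicative.toAdd h5
  by_contra hne
  rw [hf] at h6
  simp only [if_pos rfl, if_neg hne] at h6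
  exact absurd h6 (by norm_num)

end ZZAux

/-- The map `F` is a bijective correspondence between positive (resp. negative) `n`-zigzags
in `P` and simple positive (resp. negative) `n`-multifractions on `Int(P)`; moreover, if
the associated multifraction is unital then the zigzag is closed. -/
theorem zigzag_multifraction_correspondence (P : Type*) [PartialOrder P]
    (hP : LocalLattice P) (n : ℕ) (hn : 1 ≤ n) :
    (∀ x : ℕ → P, PosZigzag n x →
      ∃ a : Multifraction (IntervalMonoid P), PosImage n x a ∧ MfSimple a) ∧
    (∀ x y : ℕ → P, PosZigzag n x → PosZigzag n y →
      ∀ a : Multifraction (IntervalMonoid P), PosImage n x a → PosImage n y a →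
        ∀ i ≤ n, x i = y i) ∧
    (∀ a : Multifraction (IntervalMonoid P), MfSimple a → a.entries.length = n →
      (∃ p, a.entries.head? = some p ∧ p.1 = true) →
      ∃ x : ℕ → P, PosZigzag n x ∧ PosImage n x a) ∧
    (∀ x : ℕ → P, NegZigzag n x →
      ∃ a : Multifraction (IntervalMonoid P), NegImage n x a ∧ MfSimple a) ∧
    (∀ x y : ℕ → P, NegZigzag n x → NegZigzag n y →
      ∀ a : Multifraction (IntervalMonoid P), NegImage n x a → NegImage n y a →
        ∀ i ≤ n, x i = y i) ∧
    (∀ a : Multifraction (IntervalMonoid P), MfSimple a → a.entries.length = n →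
      (∃ p, a.entries.head? = some p ∧ p.1 = false) →
      ∃ x : ℕ → P, NegZigzag n x ∧ NegImage n x a) ∧
    (∀ (x : ℕ → P) (a : Multifraction (IntervalMonoid P)),
      (PosZigzag n x ∧ PosImage n x a) ∨ (NegZigzag n x ∧ NegImage n x a) →
      ∀ (G : Type*) [Group G] (η : IntervalMonoid P →* G),
        IsEnvelopingGroup (IntervalMonoid P) G η → mfEval η a = 1 → x n = x 0) := by
  refine ⟨fun x hx => pos_exists hx,
    fun x y hx hy a ha hb => pos_inj hn hx hy ha hb,
    fun a hs hl hh => pos_surj hn hs hl hh,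
    fun x hx => neg_exists hx,
    fun x y hx hy a ha hb => neg_inj' hn hx hy ha hb,
    fun a hs hl hh => neg_surj hn hs hl hh,
    fun x a hcase G _ η henv hev => closed_of_unital hcase G η henv hev⟩
end

section
/- Let P be a finite local lattice such that every simple closed zigzag x̄ in P admits an interpolation center, i.e., an element y with xᵢ ≤ y ≤ xⱼ for all entries xᵢ, xⱼ of x̄ with xᵢ < xⱼ. Then every simple closed n-zigzag with n ≥ 4 in P is reducible. -/
/-- If every simple closed zigzag of the finite local lattice `P` admits an interpolation
center, then every simple closed `n`-zigzag with `n ≥ 4` is reducible. -/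
theorem zigzag_reducible_of_interpolation (P : Type*) [PartialOrder P] [Finite P]
    (hP : LocalLattice P)
    (hint : ∀ (n : ℕ) (x : ℕ → P), 1 ≤ n → (PosZigzag n x ∨ NegZigzag n x) →
      x n = x 0 → SimpleZz n x →
      ∃ y : P, ∀ i ≤ n, ∀ j ≤ n, x i < x j → x i ≤ y ∧ y ≤ x j) :
    ∀ (n : ℕ) (x : ℕ → P), 4 ≤ n → (PosZigzag n x ∨ NegZigzag n x) →
      x n = x 0 → SimpleZz n x → ZzReducible n x := by
  
  intro n x hn hz hcl hs
  obtain ⟨y, hy⟩ := hint n x (by omega) hz hcl hs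
  rcases hz with hz | hz
  · -- positive zigzag: x0 < x1, x2 < x1, x2 < x3
    have h01 : x 0 < x 1 := (hz 0 (by omega) rfl).2 (by omega)
    have h21 : x 2 < x 1 := by
      have := (hz 2 (by omega) rfl).1 (by omega); simpa using this
    have h23 : x 2 < x 3 := (hz 2 (by omega) rfl).2 (by omega)
    by_cases hy1 : y = x 1
    · refine ⟨2, by omega, by omega, Or.inl ⟨le_refl 2, h23, x 1, h21, ?_, x 1, le_refl _, le_refl _⟩⟩
      have := hy 2 (by omega) 3 (by omega) h23
      rw [hy1] at this; exact this.2
    · refine ⟨1, le_refl 1, by omega, Or.inr (Or.inr (Or.inl ⟨rfl, h01, y, ?_, ?_, ?_⟩))⟩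
      · exact (hy 0 (by omega) 1 (by omega) h01).1
      · exact lt_of_le_of_ne (hy 0 (by omega) 1 (by omega) h01).2 hy1
      · exact (hy 2 (by omega) 1 (by omega) h21).1
  · -- negative zigzag: x1 < x0, x1 < x2, x3 < x2
    have h10 : x 1 < x 0 := by
      have := (hz 1 (by omega) rfl).1 (by omega); simpa using this
    have h12 : x 1 < x 2 := (hz 1 (by omega) rfl).2 (by omega)
    have h32 : x 3 < x 2 := by
      have := (hz 3 (by omega) rfl).1 (by omega); simpa using this
    by_cases hy1 : y = x 1
    · refine ⟨2, by omega, by omega, Or.inr (Or.inl ⟨le_refl 2, h32, x 1, ?_, h12, x 1, le_refl _, le_refl _⟩)⟩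
      have := hy 3 (by omega) 2 (by omega) h32
      rw [hy1] at this; exact this.1
    · refine ⟨1, le_refl 1, by omega, Or.inr (Or.inr (Or.inr ⟨rfl, h10, y, ?_, ?_, ?_⟩))⟩
      · exact lt_of_le_of_ne' (hy 1 (by omega) 0 (by omega) h10).1 hy1
      · exact (hy 1 (by omega) 0 (by omega) h10).2
      · exact (hy 1 (by omega) 2 (by omega) h12).2
end
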